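/- arXiv:1607.06483 — 6 statements merged into one kernel-verified Lean document; each statement's English description precedes it below -/
import Mathlib

section
/- Let m ≥ 1 and let u : ℝ^{m+1} → ℝ be bounded on the closed upper half space H = {x ∈ ℝ^{m+1} : x_{m+1} ≥ 0}, continuous on H, harmonic on the open half space {x : x_{m+1} > 0}, and equal to 0 at every point of the boundary hyperplane {x : x_{m+1} = 0}. Then u vanishes identically on H. (Dirichlet parabolicity of the closed Euclidean half space.) -/
open Filter Topology

/-- One-dimensional second derivative test at a local max, in `HasDerivAt` form. -/
lemma second_deriv_nonpos_of_isLocalMax {g g' : ℝ → ℝ} {a : ℝ}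
    (hg : ∀ᶠ t in 𝓝 (0:ℝ), HasDerivAt g (g' t) t)
    (hg' : HasDerivAt g' a 0) (h0 : g' 0 = 0) (hmax : IsLocalMax g 0) : a ≤ 0 := by
  by_contra hpos
  push_neg at hpos
  -- slope of g' tends to a
  have hslope : Tendsto (fun t => g' t / t) (𝓝[≠] (0:ℝ)) (𝓝 a) := by
    have h := hasDerivAt_iff_tendsto_slope.mp hg'
    have : (fun t => g' t / t) = slope g' 0 := by
      ext t; simp [slope_def_field, h0]
    rwa [this]
  have hev : ∀ᶠ t in 𝓝[≠] (0:ℝ), 0 < g' t / t :=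
    hslope.eventually (eventually_gt_nhds hpos)
  rw [eventually_nhdsWithin_iff, Metric.eventually_nhds_iff] at hev
  obtain ⟨δ₁, hδ₁, h₁⟩ := hev
  obtain ⟨δ, hδ, hball⟩ := Metric.eventually_nhds_iff.mp hg
  obtain ⟨δ₂, hδ₂, h₂⟩ := Metric.eventually_nhds_iff.mp hmax
  set t1 : ℝ := min δ (min δ₁ δ₂) / 2 with ht1def
  have ht1pos : 0 < t1 := by positivity
  have ht1δ : t1 < δ := by
    have : min δ (min δ₁ δ₂) ≤ δ := min_le_left _ _
    nlinarith
  have ht1δ₁ : t1 < δ₁ := by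
    have : min δ (min δ₁ δ₂) ≤ δ₁ := le_trans (min_le_right _ _) (min_le_left _ _)
    nlinarith
  have ht1δ₂ : t1 < δ₂ := by
    have : min δ (min δ₁ δ₂) ≤ δ₂ := le_trans (min_le_right _ _) (min_le_right _ _)
    nlinarith
  have habs : ∀ s : ℝ, s ∈ Set.Icc (0:ℝ) t1 → dist s 0 < δ := by
    intro s hs
    rw [Real.dist_eq, sub_zero, abs_of_nonneg hs.1]
    exact lt_of_le_of_lt hs.2 ht1δ
  have hderiv : ∀ s ∈ Set.Icc (0:ℝ) t1, HasDerivAt g (g' s) s := fun s hs => hball (habs s hs)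
  have hcont : ContinuousOn g (Set.Icc 0 t1) := fun s hs =>
    ((hderiv s hs).continuousAt).continuousWithinAt
  have hpos' : ∀ s ∈ interior (Set.Icc (0:ℝ) t1), 0 < deriv g s := by
    intro s hs
    rw [interior_Icc] at hs
    have hd : dist s 0 < δ₁ := by
      rw [Real.dist_eq, sub_zero, abs_of_pos hs.1]
      exact lt_trans hs.2 ht1δ₁
    have hq : 0 < g' s / s := h₁ hd (ne_of_gt hs.1)
    have hgs : 0 < g' s := by
      have := mul_pos hq hs.1
      rwa [div_mul_cancel₀ _ (ne_of_gt hs.1)] at this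
    have hds : dist s 0 < δ := by
      rw [Real.dist_eq, sub_zero, abs_of_pos hs.1]; exact lt_trans hs.2 ht1δ
    rwa [(hball hds).deriv]
  have hmono := strictMonoOn_of_deriv_pos (convex_Icc (0:ℝ) t1) hcont hpos'
  have hlt : g 0 < g t1 :=
    hmono (Set.left_mem_Icc.mpr ht1pos.le) (Set.right_mem_Icc.mpr ht1pos.le) ht1pos
  have hle : g t1 ≤ g 0 := h₂ (by rw [Real.dist_eq, sub_zero, abs_of_pos ht1pos]; exact ht1δ₂)
  linarith

/-- The Euclidean Laplacian `Δu(x) = ∑ i, ∂²u/∂xᵢ²(x)`. -/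
noncomputable def lap {n : ℕ} (u : EuclideanSpace ℝ (Fin n) → ℝ)
    (x : EuclideanSpace ℝ (Fin n)) : ℝ :=
  ∑ i : Fin n,
    fderiv ℝ (fun y => fderiv ℝ u y (EuclideanSpace.single i 1)) x (EuclideanSpace.single i 1)

/-- `u` is harmonic on `U`: it is `C²` there and its Laplacian vanishes identically on `U`. -/
def IsHarmonicOn {n : ℕ} (u : EuclideanSpace ℝ (Fin n) → ℝ)
    (U : Set (EuclideanSpace ℝ (Fin n))) : Prop :=
  ContDiffOn ℝ 2 u U ∧ ∀ x ∈ U, lap u x = 0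


variable {n : ℕ}

/-- Directional second derivative test at an interior local max. -/
lemma directional_second_deriv_nonpos {f : EuclideanSpace ℝ (Fin n) → ℝ}
    {U : Set (EuclideanSpace ℝ (Fin n))} (hU : IsOpen U)
    {x : EuclideanSpace ℝ (Fin n)} (hx : x ∈ U)
    (hf : ContDiffOn ℝ 2 f U) (hmax : IsLocalMax f x) (e : EuclideanSpace ℝ (Fin n)) :
    fderiv ℝ (fun y => fderiv ℝ f y e) x e ≤ 0 := by
  -- f is differentiable on U (at each point)
  have hdiff : ∀ y ∈ U, DifferentiableAt ℝ f y := fun y hy =>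
    (hf.differentiableOn (by norm_num)).differentiableAt (hU.mem_nhds hy)
  -- y ↦ fderiv f y e  is differentiable at x
  have hfd : ContDiffOn ℝ 1 (fderiv ℝ f) U := by
    have h2 : (1:WithTop ℕ∞) + 1 ≤ (2:WithTop ℕ∞) := by norm_num
    exact hf.fderiv_of_isOpen (m := 1) hU h2
  have hfd' : DifferentiableAt ℝ (fun y => fderiv ℝ f y e) x := by
    have h1 : DifferentiableAt ℝ (fderiv ℝ f) x :=
      (hfd.differentiableOn (by norm_num)).differentiableAt (hU.mem_nhds hx)
    exact h1.clm_apply (differentiableAt_const e)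
  -- line through x in direction e
  set c : ℝ → EuclideanSpace ℝ (Fin n) := fun t => x + t • e with hc
  have hc0 : c 0 = x := by simp [hc]
  have hccont : Continuous c := by fun_prop
  have hcderiv : ∀ t : ℝ, HasDerivAt c e t := by
    intro t
    simpa [hc] using ((hasDerivAt_id t).smul_const e).const_add x
  set g : ℝ → ℝ := fun t => f (c t) with hgdef
  set g' : ℝ → ℝ := fun t => fderiv ℝ f (c t) e with hg'def
  have hU' : ∀ᶠ t in 𝓝 (0:ℝ), c t ∈ U := by
    have : Tendsto c (𝓝 0) (𝓝 x) := by rw [← hc0]; exact hccont.continuousAt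
    exact this.eventually (hU.eventually_mem hx)
  have hg : ∀ᶠ t in 𝓝 (0:ℝ), HasDerivAt g (g' t) t := by
    filter_upwards [hU'] with t ht
    exact ((hdiff _ ht).hasFDerivAt.comp_hasDerivAt t (hcderiv t))
  have hg' : HasDerivAt g' (fderiv ℝ (fun y => fderiv ℝ f y e) x e) 0 := by
    have hfdx : HasFDerivAt (fun y => fderiv ℝ f y e)
        (fderiv ℝ (fun y => fderiv ℝ f y e) x) (c 0) := by
      rw [hc0]; exact hfd'.hasFDerivAt
    exact hfdx.comp_hasDerivAt 0 (hcderiv 0)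
  have h0 : g' 0 = 0 := by
    simp only [hg'def, hc0]
    rw [hmax.fderiv_eq_zero]
    rfl
  have hgmax : IsLocalMax g 0 := by
    have : Tendsto c (𝓝 0) (𝓝 x) := by rw [← hc0]; exact hccont.continuousAt
    have := this.eventually hmax
    rw [IsLocalMax, IsMaxFilter]
    simpa [hgdef, hc0] using this
  exact second_deriv_nonpos_of_isLocalMax hg hg' h0 hgmax

section Q
variable (a : ℝ) (d : Fin n → ℝ) (k : Fin n)

/-- the quadratic barrier -/
noncomputable def qf (a : ℝ) (d : Fin n → ℝ) (k : Fin n) : EuclideanSpace ℝ (Fin n) → ℝ :=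
  fun y => a * y k + ∑ i, d i * (y i * y i)

noncomputable def qD (x : EuclideanSpace ℝ (Fin n)) : EuclideanSpace ℝ (Fin n) →L[ℝ] ℝ :=
  a • (EuclideanSpace.proj k) +
    ∑ i, d i • (x i • (EuclideanSpace.proj i : EuclideanSpace ℝ (Fin n) →L[ℝ] ℝ)
      + x i • (EuclideanSpace.proj i : EuclideanSpace ℝ (Fin n) →L[ℝ] ℝ))

lemma qf_hasFDerivAt (x : EuclideanSpace ℝ (Fin n)) :
    HasFDerivAt (qf a d k) (qD a d k x) x := by
  have hp : ∀ i : Fin n, HasFDerivAt (fun y : EuclideanSpace ℝ (Fin n) => y i)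
      (EuclideanSpace.proj (𝕜 := ℝ) i) x := fun i =>
    ((EuclideanSpace.proj i : EuclideanSpace ℝ (Fin n) →L[ℝ] ℝ)).hasFDerivAt (x := x)
  have h1 : HasFDerivAt (fun y : EuclideanSpace ℝ (Fin n) => a * y k)
      (a • EuclideanSpace.proj (𝕜 := ℝ) k) x := (hp k).const_mul a
  have h2 : ∀ i : Fin n, HasFDerivAt (fun y : EuclideanSpace ℝ (Fin n) => d i * (y i * y i))
      (d i • (x i • (EuclideanSpace.proj (𝕜 := ℝ) i) + x i • (EuclideanSpace.proj (𝕜 := ℝ) i))) x :=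
    fun i => ((hp i).mul (hp i)).const_mul (d i)
  exact h1.add (HasFDerivAt.fun_sum (fun i _ => h2 i))

lemma qf_contDiff : ContDiff ℝ 2 (qf a d k) := by
  apply ContDiff.add
  · exact contDiff_const.mul (EuclideanSpace.proj (𝕜 := ℝ) k).contDiff
  · exact ContDiff.sum fun i _ =>
      contDiff_const.mul ((EuclideanSpace.proj (𝕜 := ℝ) i).contDiff.mul
        (EuclideanSpace.proj (𝕜 := ℝ) i).contDiff)

lemma qf_continuous : Continuous (qf a d k) := (qf_contDiff a d k).continuous

lemma qf_fderiv_apply (x e : EuclideanSpace ℝ (Fin n)) :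
    fderiv ℝ (qf a d k) x e = a * e k + ∑ i, d i * (x i * e i + x i * e i) := by
  rw [(qf_hasFDerivAt a d k x).fderiv]
  simp [qD, ContinuousLinearMap.sum_apply, mul_comm, mul_add]

lemma qf_second (x e : EuclideanSpace ℝ (Fin n)) :
    fderiv ℝ (fun y => fderiv ℝ (qf a d k) y e) x e = ∑ i, d i * (e i * e i + e i * e i) := by
  have hfun : (fun y => fderiv ℝ (qf a d k) y e) =
      fun y : EuclideanSpace ℝ (Fin n) => a * e k + ∑ i, d i * (y i * e i + y i * e i) := by
    funext y; rw [qf_fderiv_apply]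
  rw [hfun]
  have hp : ∀ i : Fin n, HasFDerivAt (fun y : EuclideanSpace ℝ (Fin n) => y i)
      (EuclideanSpace.proj (𝕜 := ℝ) i) x := fun i =>
    ((EuclideanSpace.proj i : EuclideanSpace ℝ (Fin n) →L[ℝ] ℝ)).hasFDerivAt (x := x)
  have h2 : ∀ i : Fin n,
      HasFDerivAt (fun y : EuclideanSpace ℝ (Fin n) => d i * (y i * e i + y i * e i))
      (d i • (e i • (EuclideanSpace.proj (𝕜 := ℝ) i) + e i • (EuclideanSpace.proj (𝕜 := ℝ) i))) x :=
    fun i => (((hp i).mul_const (e i)).add ((hp i).mul_const (e i))).const_mul (d i)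
  have h : HasFDerivAt
      (fun y : EuclideanSpace ℝ (Fin n) => a * e k + ∑ i, d i * (y i * e i + y i * e i))
      (∑ i, d i • (e i • (EuclideanSpace.proj (𝕜 := ℝ) i) + e i • (EuclideanSpace.proj (𝕜 := ℝ) i))) x :=
    (HasFDerivAt.fun_sum (fun i _ => h2 i)).const_add (a * e k)
  rw [h.fderiv]
  simp [ContinuousLinearMap.sum_apply, mul_comm, mul_add]

lemma qf_lap (x : EuclideanSpace ℝ (Fin n)) : lap (qf a d k) x = ∑ i, 2 * d i := by
  unfold lap
  have : ∀ j : Fin n,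
      fderiv ℝ (fun y => fderiv ℝ (qf a d k) y (EuclideanSpace.single j 1)) x
        (EuclideanSpace.single j 1) = 2 * d j := by
    intro j
    rw [qf_second]
    rw [Finset.sum_eq_single j]
    · simp [EuclideanSpace.single_apply]; ring
    · intro i _ hij
      simp [EuclideanSpace.single_apply, hij]
    · simp
  simp only [this]

end Q

lemma lap_sub {U : Set (EuclideanSpace ℝ (Fin n))} (hU : IsOpen U)
    {x : EuclideanSpace ℝ (Fin n)} (hx : x ∈ U) {u q : EuclideanSpace ℝ (Fin n) → ℝ}
    (hu : ContDiffOn ℝ 2 u U) (hq : ContDiff ℝ 2 q) :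
    lap (fun y => u y - q y) x = lap u x - lap q x := by
  have hdiffu : ∀ y ∈ U, DifferentiableAt ℝ u y := fun y hy =>
    (hu.differentiableOn (by norm_num)).differentiableAt (hU.mem_nhds hy)
  have hdiffq : ∀ y, DifferentiableAt ℝ q y := fun y =>
    (hq.differentiable (by norm_num)).differentiableAt
  have h2 : (1:WithTop ℕ∞) + 1 ≤ (2:WithTop ℕ∞) := by norm_num
  have hfu : ContDiffOn ℝ 1 (fderiv ℝ u) U := hu.fderiv_of_isOpen (m := 1) hU h2
  have hfq : ContDiff ℝ 1 (fderiv ℝ q) := hq.fderiv_right (m := 1) h2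
  have key : ∀ e : EuclideanSpace ℝ (Fin n),
      fderiv ℝ (fun y => fderiv ℝ (fun z => u z - q z) y e) x e =
      fderiv ℝ (fun y => fderiv ℝ u y e) x e - fderiv ℝ (fun y => fderiv ℝ q y e) x e := by
    intro e
    have hev : (fun y => fderiv ℝ (fun z => u z - q z) y e) =ᶠ[𝓝 x]
        (fun y => fderiv ℝ u y e - fderiv ℝ q y e) := by
      filter_upwards [hU.eventually_mem hx] with y hy
      rw [fderiv_fun_sub (hdiffu y hy) (hdiffq y)]
      rfl
    rw [hev.fderiv_eq]
    have hdu : DifferentiableAt ℝ (fun y => fderiv ℝ u y e) x :=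
      ((hfu.differentiableOn (by norm_num)).differentiableAt (hU.mem_nhds hx)).clm_apply
        (differentiableAt_const e)
    have hdq : DifferentiableAt ℝ (fun y => fderiv ℝ q y e) x :=
      ((hfq.differentiable (by norm_num)).differentiableAt).clm_apply (differentiableAt_const e)
    rw [fderiv_fun_sub hdu hdq]
    rfl
  unfold lap
  rw [← Finset.sum_sub_distrib]
  exact Finset.sum_congr rfl fun i _ => key _

lemma lap_neg (u : EuclideanSpace ℝ (Fin n) → ℝ) (x : EuclideanSpace ℝ (Fin n)) :
    lap (fun y => -u y) x = - lap u x := by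
  unfold lap
  rw [← Finset.sum_neg_distrib]
  refine Finset.sum_congr rfl fun i _ => ?_
  have h1 : (fun y => fderiv ℝ (fun z => -u z) y (EuclideanSpace.single i 1)) =
      fun y => -(fderiv ℝ u y (EuclideanSpace.single i 1)) := by
    funext y
    rw [fderiv_fun_neg]
    rfl
  rw [h1, fderiv_fun_neg]
  rfl

/-! ### The key one-sided bound -/

set_option maxHeartbeats 2000000 in
lemma upper_bound (m : ℕ) (u : EuclideanSpace ℝ (Fin (m + 1)) → ℝ) (C : ℝ) (hC : 0 ≤ C)
    (hbd : ∀ x : EuclideanSpace ℝ (Fin (m+1)), 0 ≤ x (Fin.last m) → u x ≤ C)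
    (hcont : ContinuousOn u {x : EuclideanSpace ℝ (Fin (m+1)) | 0 ≤ x (Fin.last m)})
    (hu2 : ContDiffOn ℝ 2 u {x : EuclideanSpace ℝ (Fin (m+1)) | 0 < x (Fin.last m)})
    (hlap : ∀ x : EuclideanSpace ℝ (Fin (m+1)), 0 < x (Fin.last m) → lap u x = 0)
    (hzero : ∀ x : EuclideanSpace ℝ (Fin (m+1)), x (Fin.last m) = 0 → u x = 0)
    (x0 : EuclideanSpace ℝ (Fin (m+1))) (hx0 : 0 < x0 (Fin.last m)) : u x0 ≤ 0 := by
  set lst := Fin.last m with hlst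
  set S : EuclideanSpace ℝ (Fin (m+1)) → ℝ :=
    fun y => ∑ i ∈ Finset.univ.erase lst, y i * y i with hS
  have hScont : Continuous S := by
    apply continuous_finset_sum
    intro i _
    exact ((EuclideanSpace.proj (𝕜 := ℝ) i).continuous).mul
      ((EuclideanSpace.proj (𝕜 := ℝ) i).continuous)
  have hcoordcont : Continuous fun y : EuclideanSpace ℝ (Fin (m+1)) => y lst :=
    (EuclideanSpace.proj (𝕜 := ℝ) lst).continuous
  have hSnonneg : ∀ y, 0 ≤ S y := fun y =>
    Finset.sum_nonneg fun i _ => mul_self_nonneg _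
  -- main ε-step
  have hstep : ∀ ε : ℝ, 0 < ε → u x0 ≤ ε * x0 lst := by
    intro ε hε
    -- choose R
    set R : ℝ := max (x0 lst + 1) ((C + 1) / ε) with hR
    have hRpos : 0 < R := lt_of_lt_of_le (by positivity) (le_max_left _ _)
    have hRx0 : x0 lst + 1 ≤ R := le_max_left _ _
    have hRC : C + 1 ≤ ε * R := by
      have h1 : (C + 1) / ε ≤ R := le_max_right _ _
      calc C + 1 = ε * ((C + 1) / ε) := by field_simp
        _ ≤ ε * R := by nlinarith
    set δ0 : ℝ := (ε * R - C) / ((m + 1) * R ^ 2) with hδ0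
    have hδ0pos : 0 < δ0 := by
      apply div_pos (by linarith) (by positivity)
    -- δ-step
    have hδstep : ∀ δ : ℝ, 0 < δ → δ ≤ δ0 → u x0 ≤ ε * x0 lst + δ * S x0 := by
      intro δ hδ hδle
      have hX : (0:ℝ) < (m + 1) * R ^ 2 := by positivity
      have hδR : δ * ((m + 1) * R ^ 2) ≤ ε * R - C := by
        calc δ * ((m + 1) * R ^ 2) ≤ δ0 * ((m + 1) * R ^ 2) :=
              mul_le_mul_of_nonneg_right hδle hX.le
          _ = ε * R - C := by rw [hδ0]; field_simp
      set B : ℝ := C / δ + (m + 1) * R ^ 2 + S x0 + 1 with hB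
      have hBpos : 0 < B := by
        have h1 : 0 ≤ C / δ := div_nonneg hC hδ.le
        have h2 := hSnonneg x0
        rw [hB]; nlinarith
      have hδB : C + δ * (m + 1) * R ^ 2 + δ * (S x0 + 1) = δ * B := by
        have hc : δ * (C / δ) = C := by field_simp
        rw [hB]; linear_combination -hc
      set d : Fin (m+1) → ℝ := fun i => if i = lst then -(δ * (m + 1)) else δ with hd
      set q := qf (n := m+1) ε d lst with hq
      set w : EuclideanSpace ℝ (Fin (m+1)) → ℝ := fun y => u y - q y with hw
      -- value of the quadratic part
      have hqval : ∀ y, q y = ε * y lst + (δ * S y - δ * (m + 1) * (y lst * y lst)) := by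
        intro y
        rw [hq, qf]
        congr 1
        rw [← Finset.add_sum_erase _ _ (Finset.mem_univ lst)]
        have : ∀ i ∈ Finset.univ.erase lst, d i * (y i * y i) = δ * (y i * y i) := by
          intro i hi
          rw [hd]
          simp [Finset.ne_of_mem_erase hi]
        have hdl : d lst = -(δ * (m + 1)) := by rw [hd]; simp
        rw [Finset.sum_congr rfl this, hdl, hS, Finset.mul_sum]
        ring
      have hqlap : ∀ y, lap q y = -(2 * δ) := by
        intro y
        rw [hq, qf_lap]
        rw [← Finset.add_sum_erase _ _ (Finset.mem_univ lst)]
        have : ∀ i ∈ Finset.univ.erase lst, 2 * d i = 2 * δ := by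
          intro i hi; rw [hd]; simp [Finset.ne_of_mem_erase hi]
        rw [Finset.sum_congr rfl this, Finset.sum_const, Finset.card_erase_of_mem (Finset.mem_univ lst)]
        simp [hd]
        push_cast
        ring
      -- the bounded open region
      set Ω : Set (EuclideanSpace ℝ (Fin (m+1))) :=
        {y | 0 < y lst ∧ y lst < R ∧ S y < B} with hΩ
      have hΩopen : IsOpen Ω := by
        rw [hΩ]
        exact (isOpen_lt continuous_const hcoordcont).inter
          ((isOpen_lt hcoordcont continuous_const).inter
            (isOpen_lt hScont continuous_const))
      have hUopen : IsOpen {y : EuclideanSpace ℝ (Fin (m+1)) | 0 < y lst} :=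
        isOpen_lt continuous_const hcoordcont
      have hK' : closure Ω ⊆ {y | 0 ≤ y lst ∧ y lst ≤ R ∧ S y ≤ B} := by
        apply closure_minimal
        · intro y hy
          exact ⟨hy.1.le, hy.2.1.le, hy.2.2.le⟩
        · exact (isClosed_le continuous_const hcoordcont).inter
            ((isClosed_le hcoordcont continuous_const).inter
              (isClosed_le hScont continuous_const))
      have hx0Ω : x0 ∈ Ω := by
        refine ⟨hx0, by linarith, ?_⟩
        have h1 : 0 ≤ C / δ := div_nonneg hC hδ.le
        rw [hB]; nlinarith
      have hKcomp : IsCompact (closure Ω) := by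
        apply Metric.isCompact_of_isClosed_isBounded isClosed_closure
        apply Bornology.IsBounded.subset
          (Metric.isBounded_closedBall (x := (0 : EuclideanSpace ℝ (Fin (m+1))))
            (r := Real.sqrt (B + R ^ 2)))
        intro y hy
        obtain ⟨h1, h2, h3⟩ := hK' hy
        rw [Metric.mem_closedBall, dist_zero_right]
        have hnorm : ‖y‖ = Real.sqrt (∑ i, y i ^ 2) := by
          rw [EuclideanSpace.norm_eq]
          congr 1
          exact Finset.sum_congr rfl fun i _ => by rw [Real.norm_eq_abs, sq_abs]
        rw [hnorm]
        apply Real.sqrt_le_sqrt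
        rw [← Finset.add_sum_erase _ _ (Finset.mem_univ lst)]
        have hrest : ∑ i ∈ Finset.univ.erase lst, y i ^ 2 = S y := by
          rw [hS]
          exact Finset.sum_congr rfl fun i _ => by ring
        rw [hrest]
        nlinarith
      have hwcont : ContinuousOn w (closure Ω) := by
        apply ContinuousOn.sub
        · exact hcont.mono (fun y hy => (hK' hy).1)
        · exact (qf_continuous ε d lst).continuousOn
      obtain ⟨z, hzK, hzmax⟩ :=
        hKcomp.exists_isMaxOn ⟨x0, subset_closure hx0Ω⟩ hwcont
      have hzmax' : ∀ y ∈ closure Ω, w y ≤ w z := isMaxOn_iff.mp hzmax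
      have hzΩ : z ∉ Ω := by
        intro hzmem
        have hzU : z ∈ {y : EuclideanSpace ℝ (Fin (m+1)) | 0 < y lst} := hzmem.1
        have hlocmax : IsLocalMax w z := by
          filter_upwards [hΩopen.mem_nhds hzmem] with y hy
          exact hzmax' y (subset_closure hy)
        have hw2 : ContDiffOn ℝ 2 w {y : EuclideanSpace ℝ (Fin (m+1)) | 0 < y lst} :=
          hu2.sub ((qf_contDiff ε d lst).contDiffOn)
        have hlap_w : lap w z = 2 * δ := by
          rw [hw, lap_sub hUopen hzU hu2 (qf_contDiff ε d lst), hlap z hzmem.1]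
          rw [show lap (qf ε d lst) z = -(2*δ) from hqlap z]
          ring
        have hsum : lap w z ≤ 0 := by
          unfold lap
          exact Finset.sum_nonpos fun i _ =>
            directional_second_deriv_nonpos hUopen hzU hw2 hlocmax _
        linarith
      have hzb : w z ≤ 0 := by
        obtain ⟨h1, h2, h3⟩ := hK' hzK
        have hwz : w z = u z - (ε * z lst + (δ * S z - δ * (m+1) * (z lst * z lst))) := by
          rw [hw]
          simp only
          rw [hqval z]
        have hcase : z lst = 0 ∨ z lst = R ∨ S z = B := by
          by_contra hno
          push_neg at hno
          exact hzΩ ⟨lt_of_le_of_ne h1 (Ne.symm hno.1), lt_of_le_of_ne h2 hno.2.1,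
            lt_of_le_of_ne h3 hno.2.2⟩
        have hu_le : u z ≤ C := hbd z h1
        have hSz := hSnonneg z
        rcases hcase with h0 | hR' | hB'
        · rw [hwz, hzero z h0, h0]
          nlinarith
        · rw [hwz, hR']
          nlinarith [mul_nonneg hδ.le hSz]
        · rw [hwz, hB']
          have hz2 : z lst * z lst ≤ R ^ 2 := by nlinarith
          have hε0 : 0 ≤ ε * z lst := mul_nonneg hε.le h1
          have hm1 : (0:ℝ) ≤ (m:ℝ) + 1 := by positivity
          nlinarith [hSnonneg x0, mul_le_mul_of_nonneg_left hz2 (mul_nonneg hδ.le hm1)]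
      have hfin : w x0 ≤ 0 := le_trans (hzmax' x0 (subset_closure hx0Ω)) hzb
      have hwx0 : w x0 = u x0 - (ε * x0 lst + (δ * S x0 - δ * (m+1) * (x0 lst * x0 lst))) := by
        rw [hw]
        simp only
        rw [hqval x0]
      rw [hwx0] at hfin
      have hm1 : (0:ℝ) ≤ (m:ℝ) + 1 := by positivity
      nlinarith [mul_nonneg (mul_nonneg hδ.le hm1) (mul_self_nonneg (x0 lst))]
    -- limit δ → 0
    by_contra hlt
    push_neg at hlt
    set b := u x0 - ε * x0 lst with hb
    have hbpos : 0 < b := by rw [hb]; linarith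
    have hden : (0:ℝ) < 2 * (S x0 + 1) := by nlinarith [hSnonneg x0]
    set δ := min δ0 (b / (2 * (S x0 + 1))) with hδdef
    have hδpos : 0 < δ := lt_min hδ0pos (div_pos hbpos hden)
    have hmain := hδstep δ hδpos (min_le_left _ _)
    have hδle' : δ ≤ b / (2 * (S x0 + 1)) := min_le_right _ _
    have hsmall : δ * S x0 < b := by
      have h1 : δ * S x0 ≤ (b / (2 * (S x0 + 1))) * S x0 :=
        mul_le_mul_of_nonneg_right hδle' (hSnonneg x0)
      have h2 : (b / (2 * (S x0 + 1))) * S x0 < b := by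
        rw [div_mul_eq_mul_div, div_lt_iff₀ hden]
        nlinarith [hSnonneg x0]
      linarith
    rw [hb] at hsmall
    linarith
  -- limit ε → 0
  by_contra hpos
  push_neg at hpos
  have h2pos : (0:ℝ) < 2 * x0 lst := by linarith
  have := hstep (u x0 / (2 * x0 lst)) (div_pos hpos h2pos)
  have heq : (u x0 / (2 * x0 lst)) * x0 lst = u x0 / 2 := by
    field_simp
  rw [heq] at this
  linarith

/-- Dirichlet parabolicity of the closed Euclidean half space: a bounded continuous function on
the closed upper half space of `ℝ^{m+1}` which is harmonic in the open half space and vanishes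
on the boundary hyperplane vanishes identically. -/
theorem dirichlet_parabolicity_halfspace (m : ℕ) (hm : 1 ≤ m)
    (u : EuclideanSpace ℝ (Fin (m + 1)) → ℝ)
    (H : Set (EuclideanSpace ℝ (Fin (m + 1))))
    (hH : H = {x : EuclideanSpace ℝ (Fin (m + 1)) | 0 ≤ x (Fin.last m)})
    (hbd : ∃ C : ℝ, ∀ x ∈ H, |u x| ≤ C)
    (hcont : ContinuousOn u H)
    (hharm : IsHarmonicOn u {x : EuclideanSpace ℝ (Fin (m + 1)) | 0 < x (Fin.last m)})
    (hzero : ∀ x : EuclideanSpace ℝ (Fin (m + 1)), x (Fin.last m) = 0 → u x = 0) :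
    ∀ x ∈ H, u x = 0 := by
  subst hH
  intro x hx
  have hx' : (0:ℝ) ≤ x (Fin.last m) := hx
  rcases eq_or_lt_of_le hx' with h0 | hlt
  · exact hzero x h0.symm
  obtain ⟨C, hC⟩ := hbd
  have h0mem : (0 : EuclideanSpace ℝ (Fin (m+1))) ∈
      {x : EuclideanSpace ℝ (Fin (m + 1)) | 0 ≤ x (Fin.last m)} := by
    simp [Set.mem_setOf_eq]
  have hC0 : 0 ≤ C := le_trans (abs_nonneg _) (hC 0 h0mem)
  have hupper : u x ≤ 0 := by
    apply upper_bound m u C hC0 (fun y hy => le_trans (le_abs_self _) (hC y hy)) hcont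
      hharm.1 (fun y hy => hharm.2 y hy) hzero x hlt
  have hlower : -u x ≤ 0 := by
    apply upper_bound m (fun y => -u y) C hC0
      (fun y hy => le_trans (neg_le_abs _) (hC y hy)) hcont.neg hharm.1.neg
      (fun y hy => by rw [lap_neg, hharm.2 y hy, neg_zero])
      (fun y hy => by show -u y = 0; rw [hzero y hy, neg_zero]) x hlt
  linarith
end

section
/- Let m ≥ 1 and let u : ℝ^{m+1} → ℝ be bounded on the closed upper half space H = {x : x_{m+1} ≥ 0}, continuous on H, C² on the open half space {x : x_{m+1} > 0} with Δu ≥ 0 there. Then sup_{x ∈ H} u(x) = sup_{x : x_{m+1} = 0} u(x); i.e., a bounded continuous subharmonic function on the closed half space attains its supremum on the boundary hyperplane. (Ahlfors maximum principle for bounded subharmonic functions on the Dirichlet parabolic half space.) -/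
open Filter Topology

/-- At a local max of a `C²` function, the Laplacian-type second directional
derivatives are nonpositive. -/
lemma secondDirDeriv_nonpos {N : ℕ} {w : EuclideanSpace ℝ (Fin N) → ℝ}
    {x : EuclideanSpace ℝ (Fin N)} (hw : ContDiffAt ℝ 2 w x) (hx : IsLocalMax w x)
    (e : EuclideanSpace ℝ (Fin N)) :
    fderiv ℝ (fun y => fderiv ℝ w y e) x e ≤ 0 := by
  set t₂ := fderiv ℝ (fun y => fderiv ℝ w y e) x e with ht₂
  by_contra hpos
  push_neg at hpos
  set L : ℝ → EuclideanSpace ℝ (Fin N) := fun t => x + t • e with hL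
  have hL0 : L 0 = x := by simp [hL]
  have hLd : ∀ t : ℝ, HasDerivAt L e t := by
    intro t
    have := ((hasDerivAt_id t).smul_const e).const_add x
    rw [one_smul] at this
    exact this
  set g : ℝ → ℝ := fun t => w (L t) with hg
  set g₁ : ℝ → ℝ := fun t => fderiv ℝ w (L t) e with hg₁
  -- eventual derivative of g
  have hev : ∀ᶠ t in 𝓝 (0 : ℝ), HasDerivAt g (g₁ t) t := by
    have h1 : ∀ᶠ y in 𝓝 x, DifferentiableAt ℝ w y := by
      filter_upwards [hw.eventually (by norm_num)] with y hy
      exact hy.differentiableAt (by norm_num)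
    have hLcont : ContinuousAt L 0 := (hLd 0).continuousAt
    have h2 : ∀ᶠ t in 𝓝 (0:ℝ), DifferentiableAt ℝ w (L t) := by
      have := hLcont.tendsto
      rw [hL0] at this
      exact this.eventually h1
    filter_upwards [h2] with t ht
    exact ht.hasFDerivAt.comp_hasDerivAt t (hLd t)
  -- derivative of g₁ at 0
  have hΦ : DifferentiableAt ℝ (fun y => fderiv ℝ w y e) x := by
    have h1 : ContDiffAt ℝ 1 (fderiv ℝ w) x := hw.fderiv_right (by norm_num)
    exact (h1.differentiableAt (by norm_num)).clm_apply (differentiableAt_const e)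
  have hg₁d : HasDerivAt g₁ t₂ 0 := by
    have hΦ' : HasFDerivAt (fun y => fderiv ℝ w y e)
        (fderiv ℝ (fun y => fderiv ℝ w y e) x) (L 0) := hL0.symm ▸ hΦ.hasFDerivAt
    have := hΦ'.comp_hasDerivAt 0 (hLd 0)
    exact this
  -- g has a local max at 0
  have hgmax : IsLocalMax g 0 := by
    have : IsLocalMax w (L 0) := by rw [hL0]; exact hx
    exact this.comp_continuous (hLd 0).continuousAt
  -- first derivative vanishes
  have hg₁0 : g₁ 0 = 0 := hgmax.hasDerivAt_eq_zero hev.self_of_nhds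
  -- g₁ is positive just to the right of 0
  have hslope : Tendsto (fun t => g₁ t / t) (𝓝[>] (0:ℝ)) (𝓝 t₂) := by
    have h := hasDerivAt_iff_tendsto_slope.mp hg₁d
    have h' := h.mono_left (nhdsWithin_mono 0 (by intro t ht; exact ne_of_gt ht : Set.Ioi (0:ℝ) ⊆ {0}ᶜ))
    refine h'.congr' ?_
    filter_upwards with t
    simp [slope, hg₁0, div_eq_inv_mul]
  have hpos' : ∀ᶠ t in 𝓝[>] (0:ℝ), 0 < g₁ t := by
    have h1 : ∀ᶠ t in 𝓝[>] (0:ℝ), 0 < g₁ t / t := hslope.eventually (eventually_gt_nhds hpos)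
    filter_upwards [h1, self_mem_nhdsWithin] with t ht ht'
    have : (0:ℝ) < t := ht'
    have := mul_pos ht this
    rwa [div_mul_cancel₀] at this
    exact ne_of_gt ‹(0:ℝ) < t›
  -- collect eventual facts into one ball
  have hmax' : ∀ᶠ t in 𝓝 (0:ℝ), g t ≤ g 0 := hgmax
  have hall : ∀ᶠ t in 𝓝 (0:ℝ), (HasDerivAt g (g₁ t) t ∧ g t ≤ g 0) ∧ (t ∈ Set.Ioi (0:ℝ) → 0 < g₁ t) := by
    refine ((hev.and hmax').and ?_)
    exact eventually_nhdsWithin_iff.mp hpos'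
  obtain ⟨dd, hdd, hball⟩ := Metric.eventually_nhds_iff.mp hall
  set b : ℝ := dd / 2 with hb
  have hbpos : 0 < b := by positivity
  have hmem : ∀ t ∈ Set.Icc (0:ℝ) b, dist t (0:ℝ) < dd := by
    intro t ht
    rw [Real.dist_eq, sub_zero, abs_of_nonneg ht.1]
    calc t ≤ b := ht.2
    _ < dd := by rw [hb]; linarith
  have hcont : ContinuousOn g (Set.Icc 0 b) := by
    intro t ht
    exact ((hball (hmem t ht)).1.1.continuousAt).continuousWithinAt
  have hderiv : ∀ t ∈ Set.Ioo (0:ℝ) b, HasDerivAt g (g₁ t) t := by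
    intro t ht
    exact (hball (hmem t ⟨ht.1.le, ht.2.le⟩)).1.1
  obtain ⟨cc, hcc, hccq⟩ := exists_hasDerivAt_eq_slope g g₁ hbpos hcont hderiv
  have h1 : 0 < g₁ cc := (hball (hmem cc ⟨hcc.1.le, hcc.2.le⟩)).2 hcc.1
  have h2 : g b ≤ g 0 := (hball (hmem b ⟨hbpos.le, le_rfl⟩)).1.2
  rw [hccq] at h1
  rw [sub_zero] at h1
  have : (0:ℝ) < g b - g 0 := by
    have := mul_pos h1 hbpos
    rwa [div_mul_cancel₀ _ hbpos.ne'] at this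
  linarith

lemma lap_nonpos_of_isLocalMax {N : ℕ} {w : EuclideanSpace ℝ (Fin N) → ℝ}
    {x : EuclideanSpace ℝ (Fin N)} (hw : ContDiffAt ℝ 2 w x) (hx : IsLocalMax w x) :
    lap w x ≤ 0 := by
  unfold lap
  exact Finset.sum_nonpos fun i _ => secondDirDeriv_nonpos hw hx _


lemma lap_sub_s2 {N : ℕ} {w ψ : EuclideanSpace ℝ (Fin N) → ℝ} {x : EuclideanSpace ℝ (Fin N)}
    (hw : ContDiffAt ℝ 2 w x) (hψ : ContDiff ℝ 2 ψ) :
    lap (fun y => w y - ψ y) x = lap w x - lap ψ x := by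
  unfold lap
  rw [← Finset.sum_sub_distrib]
  refine Finset.sum_congr rfl fun i _ => ?_
  set e : EuclideanSpace ℝ (Fin N) := EuclideanSpace.single i 1 with he
  have hev : (fun y => fderiv ℝ (fun z => w z - ψ z) y e)
      =ᶠ[𝓝 x] fun y => fderiv ℝ w y e - fderiv ℝ ψ y e := by
    filter_upwards [hw.eventually (by norm_num)] with y hy
    rw [fderiv_fun_sub (hy.differentiableAt (by norm_num))
      ((hψ.differentiable (by norm_num)) y)]
    rfl
  rw [hev.fderiv_eq]
  have h1 : DifferentiableAt ℝ (fun y => fderiv ℝ w y e) x :=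
    ((hw.fderiv_right (m := 1) (by norm_num)).differentiableAt (by norm_num)).clm_apply (differentiableAt_const e)
  have h2 : DifferentiableAt ℝ (fun y => fderiv ℝ ψ y e) x :=
    (((hψ.contDiffAt.fderiv_right (m := 1) (by norm_num)).differentiableAt (by norm_num))).clm_apply
      (differentiableAt_const e)
  rw [fderiv_fun_sub h1 h2]
  rfl

namespace Ahlfors

variable {m : ℕ} (α β c ε δ : ℝ)

noncomputable def S (m : ℕ) (β : ℝ) (y : EuclideanSpace ℝ (Fin (m + 1))) : ℝ :=
  ∑ i ∈ Finset.univ.erase (Fin.last m), Real.cosh (β * y i)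

noncomputable def bar (m : ℕ) (α β c ε δ : ℝ) (y : EuclideanSpace ℝ (Fin (m + 1))) : ℝ :=
  ε * y (Fin.last m) + δ * (S m β y * Real.cos (α * (y (Fin.last m) - c)))

noncomputable def barD (m : ℕ) (α β c ε δ : ℝ) (y : EuclideanSpace ℝ (Fin (m + 1))) :
    EuclideanSpace ℝ (Fin (m + 1)) →L[ℝ] ℝ :=
  ε • EuclideanSpace.proj (Fin.last m) +
    δ • (S m β y • ((-(α * Real.sin (α * (y (Fin.last m) - c)))) •
          EuclideanSpace.proj (Fin.last m)) +
        Real.cos (α * (y (Fin.last m) - c)) •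
          ∑ i ∈ Finset.univ.erase (Fin.last m),
            (β * Real.sinh (β * y i)) • EuclideanSpace.proj (𝕜 := ℝ) i)

lemma hasF_coord (i : Fin (m + 1)) (y : EuclideanSpace ℝ (Fin (m + 1))) :
    HasFDerivAt (fun x : EuclideanSpace ℝ (Fin (m + 1)) => x i)
      (EuclideanSpace.proj (𝕜 := ℝ) i) y :=
  (EuclideanSpace.proj (𝕜 := ℝ) i).hasFDerivAt

lemma hasF_cosh (i : Fin (m + 1)) (y : EuclideanSpace ℝ (Fin (m + 1))) :
    HasFDerivAt (fun x : EuclideanSpace ℝ (Fin (m + 1)) => Real.cosh (β * x i))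
      ((β * Real.sinh (β * y i)) • EuclideanSpace.proj (𝕜 := ℝ) i) y := by
  have h : HasDerivAt (fun t : ℝ => Real.cosh (β * t)) (β * Real.sinh (β * y i)) (y i) := by
    have := ((hasDerivAt_id (y i)).const_mul β).cosh
    simpa [mul_comm] using this
  exact h.comp_hasFDerivAt y (hasF_coord i y)

lemma hasF_S (y : EuclideanSpace ℝ (Fin (m + 1))) :
    HasFDerivAt (S m β)
      (∑ i ∈ Finset.univ.erase (Fin.last m),
        (β * Real.sinh (β * y i)) • EuclideanSpace.proj (𝕜 := ℝ) i) y := by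
  exact HasFDerivAt.fun_sum fun i _ => hasF_cosh β i y

lemma hasF_cos (y : EuclideanSpace ℝ (Fin (m + 1))) :
    HasFDerivAt
      (fun x : EuclideanSpace ℝ (Fin (m + 1)) => Real.cos (α * (x (Fin.last m) - c)))
      ((-(α * Real.sin (α * (y (Fin.last m) - c)))) •
        EuclideanSpace.proj (𝕜 := ℝ) (Fin.last m)) y := by
  have h2 : HasDerivAt (fun t : ℝ => α * (t - c)) α (y (Fin.last m)) := by
    simpa using ((hasDerivAt_id (y (Fin.last m))).sub_const c).const_mul α
  have h : HasDerivAt (fun t : ℝ => Real.cos (α * (t - c)))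
      (-(α * Real.sin (α * (y (Fin.last m) - c)))) (y (Fin.last m)) := by
    convert h2.cos using 1
    ring
  exact h.comp_hasFDerivAt y (hasF_coord (Fin.last m) y)

lemma hasF_bar (y : EuclideanSpace ℝ (Fin (m + 1))) :
    HasFDerivAt (bar m α β c ε δ) (barD m α β c ε δ y) y := by
  have hlin : HasFDerivAt (fun x : EuclideanSpace ℝ (Fin (m + 1)) => ε * x (Fin.last m))
      (ε • EuclideanSpace.proj (𝕜 := ℝ) (Fin.last m)) y :=
    (hasF_coord (Fin.last m) y).const_mul ε
  exact hlin.add (((hasF_S β y).mul (hasF_cos α c y)).const_mul δ)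

lemma proj_single (i j : Fin (m + 1)) :
    EuclideanSpace.proj (𝕜 := ℝ) i (EuclideanSpace.single j (1 : ℝ)) =
      if i = j then 1 else 0 := by
  simp [EuclideanSpace.single_apply]

lemma barD_apply_last (y : EuclideanSpace ℝ (Fin (m + 1))) :
    barD m α β c ε δ y (EuclideanSpace.single (Fin.last m) 1) =
      ε + δ * (S m β y * (-(α * Real.sin (α * (y (Fin.last m) - c))))) := by
  unfold barD
  rw [ContinuousLinearMap.add_apply, ContinuousLinearMap.smul_apply,
    ContinuousLinearMap.smul_apply, ContinuousLinearMap.add_apply,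
    ContinuousLinearMap.smul_apply, ContinuousLinearMap.smul_apply,
    ContinuousLinearMap.smul_apply]
  have h0 : (∑ i ∈ Finset.univ.erase (Fin.last m),
      (β * Real.sinh (β * y i)) • EuclideanSpace.proj (𝕜 := ℝ) i)
      (EuclideanSpace.single (Fin.last m) 1) = 0 := by
    rw [ContinuousLinearMap.sum_apply]
    refine Finset.sum_eq_zero fun i hi => ?_
    rw [ContinuousLinearMap.smul_apply, proj_single]
    simp [Finset.ne_of_mem_erase hi, (Finset.ne_of_mem_erase hi).symm]
  rw [h0, proj_single]
  simp

lemma barD_apply_other (j : Fin (m + 1)) (hj : j ≠ Fin.last m)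
    (y : EuclideanSpace ℝ (Fin (m + 1))) :
    barD m α β c ε δ y (EuclideanSpace.single j 1) =
      δ * (Real.cos (α * (y (Fin.last m) - c)) * (β * Real.sinh (β * y j))) := by
  unfold barD
  rw [ContinuousLinearMap.add_apply, ContinuousLinearMap.smul_apply,
    ContinuousLinearMap.smul_apply, ContinuousLinearMap.add_apply,
    ContinuousLinearMap.smul_apply, ContinuousLinearMap.smul_apply,
    ContinuousLinearMap.smul_apply]
  have h0 : (∑ i ∈ Finset.univ.erase (Fin.last m),
      (β * Real.sinh (β * y i)) • EuclideanSpace.proj (𝕜 := ℝ) i)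
      (EuclideanSpace.single j 1) = β * Real.sinh (β * y j) := by
    rw [ContinuousLinearMap.sum_apply]
    rw [Finset.sum_eq_single j]
    · rw [ContinuousLinearMap.smul_apply, proj_single]; simp
    · intro i hi hne
      rw [ContinuousLinearMap.smul_apply, proj_single]
      simp [hne]
    · intro h
      exact absurd (Finset.mem_erase.mpr ⟨hj, Finset.mem_univ j⟩) h
  rw [h0, proj_single]
  simp [hj, hj.symm]

lemma term_last (x : EuclideanSpace ℝ (Fin (m + 1))) :
    fderiv ℝ (fun y => fderiv ℝ (bar m α β c ε δ) y (EuclideanSpace.single (Fin.last m) 1)) x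
        (EuclideanSpace.single (Fin.last m) 1) =
      -(δ * (α ^ 2 * (S m β x * Real.cos (α * (x (Fin.last m) - c))))) := by
  have hfun : (fun y => fderiv ℝ (bar m α β c ε δ) y (EuclideanSpace.single (Fin.last m) 1))
      = fun y => ε + δ * (S m β y * (-(α * Real.sin (α * (y (Fin.last m) - c))))) := by
    funext y
    rw [(hasF_bar α β c ε δ y).fderiv, barD_apply_last]
  rw [hfun]
  have hg : HasFDerivAt
      (fun y : EuclideanSpace ℝ (Fin (m + 1)) => -(α * Real.sin (α * (y (Fin.last m) - c))))
      ((-(α * (α * Real.cos (α * (x (Fin.last m) - c))))) •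
        EuclideanSpace.proj (𝕜 := ℝ) (Fin.last m)) x := by
    have h2 : HasDerivAt (fun t : ℝ => α * (t - c)) α (x (Fin.last m)) := by
      simpa using ((hasDerivAt_id (x (Fin.last m))).sub_const c).const_mul α
    have h3 := (h2.sin.const_mul α).neg
    have h4 : HasDerivAt (fun t : ℝ => -(α * Real.sin (α * (t - c))))
        (-(α * (α * Real.cos (α * (x (Fin.last m) - c))))) (x (Fin.last m)) := by
      rw [show (-(α * (α * Real.cos (α * (x (Fin.last m) - c))))) =
        -(α * (Real.cos (α * (x (Fin.last m) - c)) * α)) by ring]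
      exact h3
    exact (h4.comp_hasFDerivAt x (hasF_coord (Fin.last m) x) :)
  have hf := (((hasF_S β x).fun_mul hg).const_mul δ).const_add ε
  rw [hf.fderiv]
  simp only [ContinuousLinearMap.smul_apply, ContinuousLinearMap.add_apply]
  have h0 : (∑ i ∈ Finset.univ.erase (Fin.last m),
      (β * Real.sinh (β * x i)) • EuclideanSpace.proj (𝕜 := ℝ) i)
      (EuclideanSpace.single (Fin.last m) 1) = 0 := by
    rw [ContinuousLinearMap.sum_apply]
    refine Finset.sum_eq_zero fun i hi => ?_
    rw [ContinuousLinearMap.smul_apply, proj_single]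
    simp [Finset.ne_of_mem_erase hi, (Finset.ne_of_mem_erase hi).symm]
  rw [ContinuousLinearMap.sum_apply] at h0 ⊢
  rw [h0, proj_single, if_pos rfl]
  simp only [smul_eq_mul]
  ring

lemma term_other (j : Fin (m + 1)) (hj : j ≠ Fin.last m)
    (x : EuclideanSpace ℝ (Fin (m + 1))) :
    fderiv ℝ (fun y => fderiv ℝ (bar m α β c ε δ) y (EuclideanSpace.single j 1)) x
        (EuclideanSpace.single j 1) =
      δ * (β ^ 2 * (Real.cosh (β * x j) * Real.cos (α * (x (Fin.last m) - c)))) := by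
  have hfun : (fun y => fderiv ℝ (bar m α β c ε δ) y (EuclideanSpace.single j 1))
      = fun y => δ * (Real.cos (α * (y (Fin.last m) - c)) * (β * Real.sinh (β * y j))) := by
    funext y
    rw [(hasF_bar α β c ε δ y).fderiv, barD_apply_other α β c ε δ j hj]
  rw [hfun]
  have hq : HasFDerivAt
      (fun y : EuclideanSpace ℝ (Fin (m + 1)) => β * Real.sinh (β * y j))
      ((β * (β * Real.cosh (β * x j))) • EuclideanSpace.proj (𝕜 := ℝ) j) x := by
    have h2 : HasDerivAt (fun t : ℝ => β * t) β (x j) := by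
      simpa using (hasDerivAt_id (x j)).const_mul β
    have h3 := h2.sinh.const_mul β
    have h4 : HasDerivAt (fun t : ℝ => β * Real.sinh (β * t))
        (β * (β * Real.cosh (β * x j))) (x j) := by
      rw [show (β * (β * Real.cosh (β * x j))) = β * (Real.cosh (β * x j) * β) by ring]
      exact h3
    exact (h4.comp_hasFDerivAt x (hasF_coord j x) :)
  have hf := ((hasF_cos α c x).fun_mul hq).const_mul δ
  rw [hf.fderiv]
  simp only [ContinuousLinearMap.smul_apply, ContinuousLinearMap.add_apply]
  rw [proj_single, proj_single, if_pos rfl, if_neg (Ne.symm hj)]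
  simp only [smul_eq_mul]
  ring

lemma lap_bar (x : EuclideanSpace ℝ (Fin (m + 1))) :
    lap (bar m α β c ε δ) x =
      δ * ((β ^ 2 - α ^ 2) * (S m β x * Real.cos (α * (x (Fin.last m) - c)))) := by
  unfold lap
  rw [← Finset.add_sum_erase _ _ (Finset.mem_univ (Fin.last m))]
  rw [term_last]
  rw [Finset.sum_congr rfl fun j hj => term_other α β c ε δ j (Finset.ne_of_mem_erase hj) x]
  have h1 : ∑ j ∈ Finset.univ.erase (Fin.last m),
      δ * (β ^ 2 * (Real.cosh (β * x j) * Real.cos (α * (x (Fin.last m) - c)))) =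
      δ * β ^ 2 * Real.cos (α * (x (Fin.last m) - c)) * S m β x := by
    unfold S
    rw [Finset.mul_sum]
    exact Finset.sum_congr rfl fun j _ => by ring
  rw [h1]
  ring

lemma contDiff_bar : ContDiff ℝ 2 (bar m α β c ε δ) := by
  unfold bar S
  have hc : ∀ i : Fin (m + 1), ContDiff ℝ 2 (fun x : EuclideanSpace ℝ (Fin (m + 1)) => x i) :=
    fun i => (EuclideanSpace.proj (𝕜 := ℝ) i).contDiff
  refine ContDiff.add (contDiff_const.mul (hc _)) (contDiff_const.mul (ContDiff.mul ?_ ?_))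
  · exact ContDiff.sum fun i _ => (contDiff_const.mul (hc i)).cosh
  · exact (contDiff_const.mul ((hc _).sub contDiff_const)).cos

end Ahlfors

set_option maxHeartbeats 1000000





lemma coord_le_norm {N : ℕ} (x : EuclideanSpace ℝ (Fin N)) (i : Fin N) : |x i| ≤ ‖x‖ := by
  have h : (x i) ^ 2 ≤ ∑ j, ‖x j‖ ^ 2 := by
    have := Finset.single_le_sum (f := fun j => ‖x j‖ ^ 2)
      (fun j _ => sq_nonneg _) (Finset.mem_univ i)
    simpa [Real.norm_eq_abs, sq_abs] using this
  calc |x i| = Real.sqrt ((x i) ^ 2) := (Real.sqrt_sq_eq_abs _).symm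
  _ ≤ Real.sqrt (∑ j, ‖x j‖ ^ 2) := Real.sqrt_le_sqrt h
  _ = ‖x‖ := (EuclideanSpace.norm_eq x).symm

lemma norm_le_of_coord {N : ℕ} (x : EuclideanSpace ℝ (Fin N)) (D : ℝ) (hD : 0 ≤ D)
    (h : ∀ i, |x i| ≤ D) : ‖x‖ ≤ Real.sqrt N * D := by
  rw [EuclideanSpace.norm_eq]
  have hbound : ∀ i, ‖x i‖ ^ 2 ≤ D ^ 2 := by
    intro i
    rw [Real.norm_eq_abs]
    exact pow_le_pow_left₀ (abs_nonneg _) (h i) 2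
  calc Real.sqrt (∑ i, ‖x i‖ ^ 2) ≤ Real.sqrt (∑ _i : Fin N, D ^ 2) :=
        Real.sqrt_le_sqrt (Finset.sum_le_sum fun i _ => hbound i)
  _ = Real.sqrt (N * D ^ 2) := by
        rw [Finset.sum_const, Finset.card_univ, Fintype.card_fin, nsmul_eq_mul]
  _ = Real.sqrt N * D := by
        rw [Real.sqrt_mul (by positivity), Real.sqrt_sq hD]

lemma half_add_le_cosh (t : ℝ) (ht : 0 ≤ t) : (1 + t) / 2 ≤ Real.cosh t := by
  rw [Real.cosh_eq]
  have h1 : t + 1 ≤ Real.exp t := Real.add_one_le_exp t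
  have h2 : 0 < Real.exp (-t) := Real.exp_pos _
  linarith

lemma cos_ge_half {t : ℝ} (ht : |t| ≤ 1) : 1 / 2 ≤ Real.cos t := by
  have h := Real.one_sub_sq_div_two_le_cos (x := t)
  have h2 : t ^ 2 ≤ 1 := by nlinarith [abs_nonneg t, sq_abs t]
  linarith


/-- Ahlfors maximum principle on the Dirichlet parabolic half space: a bounded continuous
function on the closed upper half space of `ℝ^{m+1}` which is `C²` with `Δu ≥ 0` on the open
half space attains its supremum on the boundary hyperplane. -/
theorem ahlfors_max_principle_halfspace (m : ℕ) (hm : 1 ≤ m)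
    (u : EuclideanSpace ℝ (Fin (m + 1)) → ℝ)
    (H : Set (EuclideanSpace ℝ (Fin (m + 1))))
    (hH : H = {x : EuclideanSpace ℝ (Fin (m + 1)) | 0 ≤ x (Fin.last m)})
    (hbd : ∃ C : ℝ, ∀ x ∈ H, |u x| ≤ C)
    (hcont : ContinuousOn u H)
    (hC2 : ContDiffOn ℝ 2 u {x : EuclideanSpace ℝ (Fin (m + 1)) | 0 < x (Fin.last m)})
    (hsub : ∀ x : EuclideanSpace ℝ (Fin (m + 1)), 0 < x (Fin.last m) → 0 ≤ lap u x) :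
    sSup (u '' H) =
      sSup (u '' {x : EuclideanSpace ℝ (Fin (m + 1)) | x (Fin.last m) = 0}) := by
  classical
  obtain ⟨C, hC⟩ := hbd
  set B : Set (EuclideanSpace ℝ (Fin (m + 1))) :=
    {x : EuclideanSpace ℝ (Fin (m + 1)) | x (Fin.last m) = 0} with hB
  have h0B : (0 : EuclideanSpace ℝ (Fin (m + 1))) ∈ B := by simp [hB]
  have hBH : B ⊆ H := by rw [hH]; intro x hx; exact le_of_eq (hx.symm)
  have hbddH : BddAbove (u '' H) := ⟨C, by rintro _ ⟨x, hx, rfl⟩; exact (abs_le.mp (hC x hx)).2⟩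
  have hbddB : BddAbove (u '' B) := hbddH.mono (Set.image_mono hBH)
  set M := sSup (u '' B) with hM
  have hMub : ∀ y ∈ B, u y ≤ M := fun y hy => le_csSup hbddB ⟨y, hy, rfl⟩
  have hcont_i : ∀ i : Fin (m + 1),
      Continuous (fun x : EuclideanSpace ℝ (Fin (m + 1)) => x i) :=
    fun i => (EuclideanSpace.proj (𝕜 := ℝ) i).continuous
  have key : ∀ x₀ ∈ H, u x₀ ≤ M := by
    intro x₀ hx₀
    have hx₀n : 0 ≤ x₀ (Fin.last m) := by rw [hH] at hx₀; exact hx₀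
    rcases eq_or_lt_of_le hx₀n with ha | ha
    · exact hMub x₀ ha.symm
    have hstep : ∀ ε > (0 : ℝ), u x₀ ≤ M + ε * x₀ (Fin.last m) := by
      intro ε hε
      set a := x₀ (Fin.last m) with haa
      set T : ℝ := max (a + 1) ((C - M) / ε + 1) with hT
      have hTa : a + 1 ≤ T := le_max_left _ _
      have hT0 : 0 < T := lt_of_lt_of_le (by linarith) hTa
      have hTC : C - M + ε ≤ ε * T := by
        have h1 : (C - M) / ε + 1 ≤ T := le_max_right _ _
        have h2 := mul_le_mul_of_nonneg_left h1 hε.le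
        rw [mul_add, mul_one, mul_div_cancel₀ _ hε.ne'] at h2
        linarith
      set α : ℝ := Real.pi / (2 * T) with hα
      have hα0 : 0 < α := div_pos Real.pi_pos (by linarith)
      set β : ℝ := α / 2 with hβ
      have hβ0 : 0 < β := by positivity
      set c : ℝ := T / 2 with hc
      have hcos : ∀ s : ℝ, 0 ≤ s → s ≤ T → 1 / 2 ≤ Real.cos (α * (s - c)) := by
        intro s h1 h2
        apply cos_ge_half
        have h3 : |s - c| ≤ T / 2 := by
          rw [abs_le, hc]; constructor <;> linarith
        have h4 : |α * (s - c)| = α * |s - c| := by rw [abs_mul, abs_of_pos hα0]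
        rw [h4]
        have h5 : α * |s - c| ≤ α * (T / 2) := by nlinarith
        have h6 : α * (T / 2) = Real.pi / 4 := by
          rw [hα]; field_simp; ring
        have h7 : Real.pi / 4 ≤ 1 := by have := Real.pi_le_four; linarith
        linarith
      have hSnonneg : ∀ y, 0 ≤ Ahlfors.S m β y := fun y =>
        Finset.sum_nonneg fun i _ => (Real.cosh_pos _).le
      have hS1 : ∀ y, ∀ i ∈ Finset.univ.erase (Fin.last m),
          Real.cosh (β * y i) ≤ Ahlfors.S m β y := by
        intro y i hi
        exact Finset.single_le_sum (f := fun j => Real.cosh (β * y j))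
          (fun j _ => (Real.cosh_pos _).le) hi
      have hne0 : (0 : Fin (m + 1)) ∈ Finset.univ.erase (Fin.last m) := by
        refine Finset.mem_erase.mpr ⟨?_, Finset.mem_univ _⟩
        simp only [ne_eq, Fin.ext_iff, Fin.val_last, Fin.val_zero]
        omega
      have hδstep : ∀ δ > (0 : ℝ), u x₀ ≤ M + ε * a + δ * Ahlfors.S m β x₀ := by
        intro δ hδ
        set R : ℝ := max (‖x₀‖ + 1) (4 * (C - M) / (δ * β)) with hR
        have hR0 : 0 < R := lt_of_lt_of_le (by positivity) (le_max_left _ _)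
        have hRx : ‖x₀‖ + 1 ≤ R := le_max_left _ _
        have hRC : 4 * (C - M) / (δ * β) ≤ R := le_max_right _ _
        set K : Set (EuclideanSpace ℝ (Fin (m + 1))) :=
          (fun x : EuclideanSpace ℝ (Fin (m + 1)) => x (Fin.last m)) ⁻¹' Set.Icc 0 T ∩
            ⋂ i ∈ Finset.univ.erase (Fin.last m),
              (fun x : EuclideanSpace ℝ (Fin (m + 1)) => x i) ⁻¹' Set.Icc (-R) R with hK
        have hKmem : ∀ x, x ∈ K ↔ (0 ≤ x (Fin.last m) ∧ x (Fin.last m) ≤ T) ∧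
            ∀ i ∈ Finset.univ.erase (Fin.last m), -R ≤ x i ∧ x i ≤ R := by
          intro x
          simp [hK, Set.mem_iInter, Set.mem_Icc]
        have hKclosed : IsClosed K := by
          refine IsClosed.inter (isClosed_Icc.preimage (hcont_i _)) ?_
          exact isClosed_biInter fun i _ => isClosed_Icc.preimage (hcont_i i)
        have hKsub : K ⊆ Metric.closedBall 0 (Real.sqrt ((m + 1 : ℕ) : ℝ) * max T R) := by
          intro x hx
          obtain ⟨⟨h1, h2⟩, h3⟩ := (hKmem x).mp hx
          rw [Metric.mem_closedBall, dist_zero_right]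
          refine norm_le_of_coord x _ (le_trans hT0.le (le_max_left _ _)) fun i => ?_
          by_cases hi : i = Fin.last m
          · subst hi
            rw [abs_le]
            constructor
            · linarith [le_max_left T R]
            · exact h2.trans (le_max_left T R)
          · obtain ⟨hl, hr⟩ := h3 i (Finset.mem_erase.mpr ⟨hi, Finset.mem_univ _⟩)
            rw [abs_le]
            constructor
            · have := le_max_right T R; linarith
            · exact hr.trans (le_max_right T R)
        have hKcpt : IsCompact K :=
          (isCompact_closedBall _ _).of_isClosed_subset hKclosed hKsub
        have hKH : K ⊆ H := by
          rw [hH]; intro x hx; exact ((hKmem x).mp hx).1.1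
        have hx₀K : x₀ ∈ K := by
          rw [hKmem]
          refine ⟨⟨hx₀n, by linarith⟩, fun i _ => ?_⟩
          have h1 := coord_le_norm x₀ i
          have h2 : |x₀ i| ≤ R := by linarith
          exact abs_le.mp h2
        set v : EuclideanSpace ℝ (Fin (m + 1)) → ℝ :=
          fun y => u y - Ahlfors.bar m α β c ε δ y with hv
        have hvcont : ContinuousOn v K :=
          (hcont.mono hKH).sub (Ahlfors.contDiff_bar α β c ε δ).continuous.continuousOn
        obtain ⟨p, hpK, hpmax⟩ := hKcpt.exists_isMaxOn ⟨x₀, hx₀K⟩ hvcont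
        obtain ⟨⟨hp1, hp2⟩, hp3⟩ := (hKmem p).mp hpK
        have hpH : p ∈ H := hKH hpK
        have hpcos : 1 / 2 ≤ Real.cos (α * (p (Fin.last m) - c)) := hcos _ hp1 hp2
        have hbar0 : 0 ≤ Ahlfors.S m β p * Real.cos (α * (p (Fin.last m) - c)) :=
          mul_nonneg (hSnonneg p) (by linarith)
        have hvpM : v p ≤ M := by
          by_cases hb : p (Fin.last m) = 0
          · have hu1 : u p ≤ M := hMub p hb
            have hbar : 0 ≤ Ahlfors.bar m α β c ε δ p := by
              unfold Ahlfors.bar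
              have := mul_nonneg hε.le hp1
              have := mul_nonneg hδ.le hbar0
              linarith
            show u p - Ahlfors.bar m α β c ε δ p ≤ M
            linarith
          by_cases ht : p (Fin.last m) = T
          · have hup : u p ≤ C := (abs_le.mp (hC p hpH)).2
            have hbar : ε * T ≤ Ahlfors.bar m α β c ε δ p := by
              unfold Ahlfors.bar
              have h7 : ε * T = ε * p (Fin.last m) := by rw [ht]
              have h8 := mul_nonneg hδ.le hbar0
              linarith
            show u p - Ahlfors.bar m α β c ε δ p ≤ M
            linarith
          by_cases hside : ∃ i ∈ Finset.univ.erase (Fin.last m), |p i| = R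
          · obtain ⟨i, hi, habs⟩ := hside
            have hcoshR : Real.cosh (β * p i) = Real.cosh (β * R) := by
              rcases (abs_eq hR0.le).mp habs with h | h
              · rw [h]
              · rw [h, mul_neg, Real.cosh_neg]
            have hSge : Real.cosh (β * R) ≤ Ahlfors.S m β p := hcoshR ▸ hS1 p i hi
            have hcosh2 : (1 + β * R) / 2 ≤ Real.cosh (β * R) :=
              half_add_le_cosh _ (by positivity)
            have hβR : 4 * (C - M) / δ ≤ β * R := by
              have h1 := mul_le_mul_of_nonneg_left hRC hβ0.le
              have h2 : β * (4 * (C - M) / (δ * β)) = 4 * (C - M) / δ := by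
                field_simp
              rw [h2] at h1
              exact h1
            have h5 : Real.cosh (β * R) * (1 / 2) ≤
                Ahlfors.S m β p * Real.cos (α * (p (Fin.last m) - c)) :=
              mul_le_mul hSge hpcos (by norm_num) (hSnonneg p)
            have hup : u p ≤ C := (abs_le.mp (hC p hpH)).2
            have hbar : C - M ≤ Ahlfors.bar m α β c ε δ p := by
              unfold Ahlfors.bar
              have h6 : 0 ≤ ε * p (Fin.last m) := mul_nonneg hε.le hp1
              have e1 : δ * (Real.cosh (β * R) * (1 / 2)) ≤
                  δ * (Ahlfors.S m β p * Real.cos (α * (p (Fin.last m) - c))) :=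
                mul_le_mul_of_nonneg_left h5 hδ.le
              have e2 : δ * ((1 + β * R) / 2 * (1 / 2)) ≤
                  δ * (Real.cosh (β * R) * (1 / 2)) := by
                have := mul_le_mul_of_nonneg_right hcosh2 (by norm_num : (0:ℝ) ≤ 1 / 2)
                exact mul_le_mul_of_nonneg_left this hδ.le
              have e3 : 4 * (C - M) ≤ δ * (β * R) := by
                have h9 := mul_le_mul_of_nonneg_left hβR hδ.le
                have h10 : δ * (4 * (C - M) / δ) = 4 * (C - M) := by field_simp
                linarith
              linarith
            show u p - Ahlfors.bar m α β c ε δ p ≤ M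
            linarith
          · exfalso
            have hb' : 0 < p (Fin.last m) := lt_of_le_of_ne hp1 (Ne.symm hb)
            have ht' : p (Fin.last m) < T := lt_of_le_of_ne hp2 ht
            have hside' : ∀ i ∈ Finset.univ.erase (Fin.last m), -R < p i ∧ p i < R := by
              intro i hi
              obtain ⟨h1, h2⟩ := hp3 i hi
              rcases lt_or_eq_of_le (abs_le.mpr ⟨h1, h2⟩) with h | h
              · exact abs_lt.mp h
              · exact absurd ⟨i, hi, h⟩ hside
            set U : Set (EuclideanSpace ℝ (Fin (m + 1))) :=
              (fun x : EuclideanSpace ℝ (Fin (m + 1)) => x (Fin.last m)) ⁻¹' Set.Ioo 0 T ∩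
                ⋂ i ∈ Finset.univ.erase (Fin.last m),
                  (fun x : EuclideanSpace ℝ (Fin (m + 1)) => x i) ⁻¹' Set.Ioo (-R) R with hU
            have hUopen : IsOpen U := by
              refine IsOpen.inter (isOpen_Ioo.preimage (hcont_i _)) ?_
              exact isOpen_biInter_finset fun i _ => isOpen_Ioo.preimage (hcont_i i)
            have hpU : p ∈ U := by
              refine ⟨⟨hb', ht'⟩, ?_⟩
              simp only [hU, Set.mem_iInter]
              intro i hi
              exact hside' i hi
            have hUK : U ⊆ K := by
              intro x hx
              obtain ⟨⟨h1, h2⟩, h3⟩ := hx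
              rw [hKmem]
              refine ⟨⟨h1.le, h2.le⟩, fun i hi => ?_⟩
              have := Set.mem_iInter₂.mp h3 i hi
              exact ⟨this.1.le, this.2.le⟩
            have hKnhds : K ∈ 𝓝 p := Filter.mem_of_superset (hUopen.mem_nhds hpU) hUK
            have hloc : IsLocalMax v p := hpmax.isLocalMax hKnhds
            have hopen2 : IsOpen {x : EuclideanSpace ℝ (Fin (m + 1)) | 0 < x (Fin.last m)} :=
              isOpen_Ioi.preimage (hcont_i (Fin.last m))
            have hup2 : ContDiffAt ℝ 2 u p := hC2.contDiffAt (hopen2.mem_nhds hb')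
            have hvC2 : ContDiffAt ℝ 2 v p :=
              hup2.sub (Ahlfors.contDiff_bar α β c ε δ).contDiffAt
            have hlap0 : lap v p ≤ 0 := lap_nonpos_of_isLocalMax hvC2 hloc
            have hlapsub : lap v p = lap u p - lap (Ahlfors.bar m α β c ε δ) p :=
              lap_sub_s2 hup2 (Ahlfors.contDiff_bar α β c ε δ)
            have hlapbar := Ahlfors.lap_bar (m := m) α β c ε δ p
            have hlapu : 0 ≤ lap u p := hsub p hb'
            have hSp1 : 1 ≤ Ahlfors.S m β p :=
              le_trans (Real.one_le_cosh _) (hS1 p _ hne0)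
            have hba : β ^ 2 - α ^ 2 < 0 := by rw [hβ]; nlinarith
            have hbarneg : lap (Ahlfors.bar m α β c ε δ) p < 0 := by
              rw [hlapbar]
              apply mul_neg_of_pos_of_neg hδ
              apply mul_neg_of_neg_of_pos hba
              nlinarith
            linarith
        have hvx₀ : v x₀ ≤ M := le_trans (hpmax hx₀K) hvpM
        have hbarx₀ : Ahlfors.bar m α β c ε δ x₀ ≤ ε * a + δ * Ahlfors.S m β x₀ := by
          unfold Ahlfors.bar
          have h1 : Real.cos (α * (x₀ (Fin.last m) - c)) ≤ 1 := Real.cos_le_one _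
          have h2 := hSnonneg x₀
          have e4 : δ * (Ahlfors.S m β x₀ * Real.cos (α * (x₀ (Fin.last m) - c))) ≤
              δ * Ahlfors.S m β x₀ := by
            have : Ahlfors.S m β x₀ * Real.cos (α * (x₀ (Fin.last m) - c)) ≤
                Ahlfors.S m β x₀ * 1 := mul_le_mul_of_nonneg_left h1 h2
            have := mul_le_mul_of_nonneg_left this hδ.le
            linarith
          linarith [haa]
        have hvx₀' : u x₀ - Ahlfors.bar m α β c ε δ x₀ ≤ M := hvx₀
        linarith
      refine le_of_forall_pos_le_add fun η hη => ?_
      have hS0 := hSnonneg x₀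
      have hδ : 0 < η / (Ahlfors.S m β x₀ + 1) := div_pos hη (by linarith)
      have h1 := hδstep _ hδ
      have h2 : η / (Ahlfors.S m β x₀ + 1) * Ahlfors.S m β x₀ ≤ η := by
        rw [div_mul_eq_mul_div, div_le_iff₀ (by linarith)]
        nlinarith
      linarith
    refine le_of_forall_pos_le_add fun η hη => ?_
    have h := hstep (η / x₀ (Fin.last m)) (div_pos hη ha)
    rw [div_mul_cancel₀ _ (ne_of_gt ha)] at h
    exact h
  apply le_antisymm
  · refine csSup_le ⟨u 0, Set.mem_image_of_mem u (hBH h0B)⟩ ?_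
    rintro _ ⟨x, hx, rfl⟩
    calc u x ≤ M := key x hx
    _ ≤ sSup (u '' B) := le_rfl
  · exact csSup_le_csSup hbddH ⟨u 0, Set.mem_image_of_mem u h0B⟩ (Set.image_mono hBH)
end

section
/- For every integer m ≥ 3 and all real numbers a ≥ 3 and r ≥ 0, the following inequality holds: (r² + (a−1)²)^{−(m−2)/2} − (r² + (a+1)²)^{−(m−2)/2} ≥ (m−2)·(a+1)·(r² + (a+1)²)^{−m/2}. -/
open Real

/-- Key algebraic inequality from Bernoulli's inequality: for `0 < A ≤ B` and `p > 0`,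
`p·(B−A)·B^{-(p+1)} ≤ A^{-p} − B^{-p}`. -/
lemma key_ineq (A B p : ℝ) (hA : 0 < A) (hAB : A ≤ B) (hp : 0 < p) :
    p * (B - A) * B ^ (-(p + 1)) ≤ A ^ (-p) - B ^ (-p) := by
  have hB : 0 < B := lt_of_lt_of_le hA hAB
  have hs : (0:ℝ) ≤ B / A - 1 := by
    rw [le_sub_iff_add_le, zero_add, le_div_iff₀ hA]; linarith
  have hbern := one_add_mul_self_le_rpow_one_add (s := B / A - 1)
    (by linarith) (p := p + 1) (by linarith)
  rw [add_sub_cancel] at hbern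
  have hid : A * (B / A) ^ (p + 1) = A ^ (-p) * B ^ (p + 1) := by
    rw [Real.div_rpow hB.le hA.le, Real.rpow_neg hA.le, Real.rpow_add hA, Real.rpow_one]
    have hAp : (0:ℝ) < A ^ p := Real.rpow_pos_of_pos hA p
    field_simp
  have hkey : B + p * (B - A) ≤ A ^ (-p) * B ^ (p + 1) := by
    have h1 := mul_le_mul_of_nonneg_left hbern hA.le
    rw [hid] at h1
    calc B + p * (B - A) = A * (1 + (p + 1) * (B / A - 1)) := by field_simp; ring
      _ ≤ A ^ (-p) * B ^ (p + 1) := h1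
  have hBp1 : (0:ℝ) < B ^ (p + 1) := Real.rpow_pos_of_pos hB _
  have e1 : B ^ (-p) = B * (B ^ (p + 1))⁻¹ := by
    have h : (1:ℝ) + -(p + 1) = -p := by ring
    rw [← h, Real.rpow_add hB, Real.rpow_one, Real.rpow_neg hB.le]
  have e2 : B ^ (-(p + 1)) = (B ^ (p + 1))⁻¹ := Real.rpow_neg hB.le _
  rw [e1, e2]
  have hBinv : (0:ℝ) < (B ^ (p + 1))⁻¹ := inv_pos.mpr hBp1
  have h2 := mul_le_mul_of_nonneg_right hkey hBinv.le
  calc p * (B - A) * (B ^ (p + 1))⁻¹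
      ≤ (A ^ (-p) * B ^ (p + 1)) * (B ^ (p + 1))⁻¹ - B * (B ^ (p + 1))⁻¹ := by nlinarith
    _ = A ^ (-p) - B * (B ^ (p + 1))⁻¹ := by
        rw [mul_assoc, mul_inv_cancel₀ hBp1.ne', mul_one]

/-- Mean value theorem estimate for `ξ ↦ (r² + ξ²)^{-(m-2)/2}` on `[a-1, a+1]`: for every
integer `m ≥ 3` and reals `a ≥ 3`, `r ≥ 0`,
`(r² + (a-1)²)^{-(m-2)/2} - (r² + (a+1)²)^{-(m-2)/2} ≥ (m-2)·(a+1)·(r² + (a+1)²)^{-m/2}`. -/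
theorem green_kernel_pointwise_lower_bound (m : ℕ) (hm : 3 ≤ m) (a r : ℝ)
    (ha : 3 ≤ a) (hr : 0 ≤ r) :
    ((m : ℝ) - 2) * (a + 1) * (r ^ 2 + (a + 1) ^ 2) ^ (-(m : ℝ) / 2) ≤
      (r ^ 2 + (a - 1) ^ 2) ^ (-((m : ℝ) - 2) / 2) -
        (r ^ 2 + (a + 1) ^ 2) ^ (-((m : ℝ) - 2) / 2) := by
  have hm' : (3:ℝ) ≤ (m:ℝ) := by exact_mod_cast hm
  set A := r ^ 2 + (a - 1) ^ 2 with hAdef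
  set B := r ^ 2 + (a + 1) ^ 2 with hBdef
  set p := ((m:ℝ) - 2) / 2 with hpdef
  have hA : 0 < A := by rw [hAdef]; nlinarith [sq_nonneg r]
  have hB : 0 < B := by rw [hBdef]; nlinarith [sq_nonneg r]
  have hAB : A ≤ B := by rw [hAdef, hBdef]; nlinarith
  have hp : 0 < p := by rw [hpdef]; linarith
  have eexp : -(m:ℝ) / 2 = -(p + 1) := by rw [hpdef]; ring
  have eexp2 : -((m:ℝ) - 2) / 2 = -p := by rw [hpdef]; ring
  rw [eexp, eexp2]
  have hBexp : (0:ℝ) ≤ B ^ (-(p + 1)) := (Real.rpow_pos_of_pos hB _).le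
  have hcoef : ((m:ℝ) - 2) * (a + 1) ≤ p * (B - A) := by
    rw [hpdef, hAdef, hBdef]; nlinarith
  calc ((m:ℝ) - 2) * (a + 1) * B ^ (-(p + 1))
      ≤ p * (B - A) * B ^ (-(p + 1)) := mul_le_mul_of_nonneg_right hcoef hBexp
    _ ≤ A ^ (-p) - B ^ (-p) := key_ineq A B p hA hAB hp
end

section
/- Let m ≥ 2 be an integer, let 0 < λ < 2m, set α = (−(m−2) + √((m−2)² + 4λ))/2, and for R > 1 define h_R : [0,R] → ℝ by h_R(r) = (1/(2m−λ))·((r/R)^α · R² − r²). Then: (a) 0 < α < 2 and α² + (m−2)α = λ; (b) for every r ∈ (0,R), h_R''(r) + ((m−1)/r)·h_R'(r) − (λ/r²)·h_R(r) = −1; (c) h_R(0) = h_R(R) = 0 and h_R(r) > 0 for r ∈ (0,R); (d) h_R(1) = (R^{2−α} − 1)/(2m−λ), which tends to +∞ as R → +∞. -/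
private lemma cone_hasDerivAt1 (c alpha R : ℝ) (hR : 0 < R) (x : ℝ) (hx : 0 < x) :
    HasDerivAt (fun r : ℝ => c * ((r / R) ^ alpha * R ^ 2 - r ^ 2))
      (c * (alpha * (x / R) ^ (alpha - 1) * (1 / R) * R ^ 2 - 2 * x)) x := by
  have h1 : HasDerivAt (fun r : ℝ => r / R) (1 / R) x := by
    simpa using (hasDerivAt_id x).div_const R
  have h2 : HasDerivAt (fun r : ℝ => (r / R) ^ alpha)
      (alpha * (x / R) ^ (alpha - 1) * (1 / R)) x :=
    by have := (Real.hasDerivAt_rpow_const (x := x / R) (p := alpha) (Or.inl (div_pos hx hR).ne')).comp x h1; exact this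
  have h3 : HasDerivAt (fun r : ℝ => r ^ 2) (2 * x) x := by
    simpa using hasDerivAt_pow 2 x
  exact ((h2.mul_const (R ^ 2)).sub h3).const_mul c

private lemma cone_hasDerivAt2 (c alpha R : ℝ) (hR : 0 < R) (x : ℝ) (hx : 0 < x) :
    HasDerivAt (fun r : ℝ => c * (alpha * (r / R) ^ (alpha - 1) * (1 / R) * R ^ 2 - 2 * r))
      (c * (alpha * ((alpha - 1) * (x / R) ^ (alpha - 1 - 1) * (1 / R)) * (1 / R) * R ^ 2 - 2)) x := by
  have h1 : HasDerivAt (fun r : ℝ => r / R) (1 / R) x := by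
    simpa using (hasDerivAt_id x).div_const R
  have h2 : HasDerivAt (fun r : ℝ => (r / R) ^ (alpha - 1))
      ((alpha - 1) * (x / R) ^ (alpha - 1 - 1) * (1 / R)) x :=
    by have := (Real.hasDerivAt_rpow_const (x := x / R) (p := alpha - 1) (Or.inl (div_pos hx hR).ne')).comp x h1; exact this
  have h3 : HasDerivAt (fun r : ℝ => 2 * r) 2 x := by
    simpa using (hasDerivAt_id x).const_mul (2:ℝ)
  have h4 := (((h2.const_mul alpha).mul_const ((1:ℝ)/R)).mul_const (R ^ 2)).sub h3
  exact (h4.const_mul c).congr_deriv (by ring)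

/-- Radial solution of the cone mean exit time equation when `λ < 2m`: with
`α = (-(m-2) + √((m-2)² + 4λ))/2` and `h_R(r) = (1/(2m-λ))·((r/R)^α·R² - r²)`, one has
(a) `0 < α < 2` and `α² + (m-2)α = λ`; (b) `h_R'' + ((m-1)/r)h_R' - (λ/r²)h_R = -1` on `(0,R)`;
(c) `h_R(0) = h_R(R) = 0` and `h_R > 0` on `(0,R)`; (d) `h_R(1) = (R^{2-α} - 1)/(2m-λ) → +∞`
as `R → +∞`. -/
theorem cone_exit_time_radial_ode (m : ℕ) (hm : 2 ≤ m) (lam : ℝ)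
    (hlam₀ : 0 < lam) (hlam₁ : lam < 2 * m)
    (alpha : ℝ)
    (halpha : alpha = (-((m : ℝ) - 2) + Real.sqrt (((m : ℝ) - 2) ^ 2 + 4 * lam)) / 2)
    (h : ℝ → ℝ → ℝ)
    (hh : ∀ R r : ℝ, h R r = (1 / (2 * m - lam)) * ((r / R) ^ alpha * R ^ 2 - r ^ 2)) :
    (0 < alpha ∧ alpha < 2 ∧ alpha ^ 2 + ((m : ℝ) - 2) * alpha = lam) ∧
    (∀ R : ℝ, 1 < R → ∀ r ∈ Set.Ioo (0 : ℝ) R,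
      deriv (deriv (h R)) r + (((m : ℝ) - 1) / r) * deriv (h R) r
        - (lam / r ^ 2) * h R r = -1) ∧
    (∀ R : ℝ, 1 < R → h R 0 = 0 ∧ h R R = 0 ∧ ∀ r ∈ Set.Ioo (0 : ℝ) R, 0 < h R r) ∧
    (∀ R : ℝ, 1 < R → h R 1 = (R ^ (2 - alpha) - 1) / (2 * m - lam)) ∧
    Filter.Tendsto (fun R : ℝ => h R 1) Filter.atTop Filter.atTop := by
  have hm2 : (2:ℝ) ≤ (m:ℝ) := by exact_mod_cast hm
  have hb : (0:ℝ) ≤ (m:ℝ) - 2 := by linarith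
  have hsq : Real.sqrt (((m:ℝ) - 2) ^ 2 + 4 * lam) ^ 2 = ((m:ℝ) - 2) ^ 2 + 4 * lam :=
    Real.sq_sqrt (by positivity)
  have ha0 : 0 < alpha := by
    rw [halpha]
    have : (m:ℝ) - 2 < Real.sqrt (((m:ℝ) - 2) ^ 2 + 4 * lam) := by
      nlinarith [Real.sqrt_nonneg (((m:ℝ) - 2) ^ 2 + 4 * lam)]
    linarith
  have ha2 : alpha < 2 := by
    rw [halpha]
    have : Real.sqrt (((m:ℝ) - 2) ^ 2 + 4 * lam) < ((m:ℝ) - 2) + 4 := by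
      rw [Real.sqrt_lt' (by linarith)]
      nlinarith
    linarith
  have hquad : alpha ^ 2 + ((m:ℝ) - 2) * alpha = lam := by
    rw [halpha]; linear_combination hsq / 4
  have hclam : (0:ℝ) < 2 * m - lam := by linarith
  have hval : ∀ R : ℝ, 1 < R → h R 1 = (R ^ (2 - alpha) - 1) / (2 * m - lam) := by
    intro R hR1
    have hR : (0:ℝ) < R := by linarith
    rw [hh]
    have key : ((1:ℝ) / R) ^ alpha * R ^ 2 = R ^ (2 - alpha) := by
      rw [one_div, Real.inv_rpow hR.le, ← Real.rpow_neg hR.le, ← Real.rpow_natCast R 2,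
        ← Real.rpow_add hR]
      congr 1
      push_cast
      ring
    rw [key, one_pow]
    ring
  refine ⟨⟨ha0, ha2, hquad⟩, ?_, ?_, hval, ?_⟩
  · -- ODE
    intro R hR1 r hr
    have hR : (0:ℝ) < R := by linarith
    have hr0 : 0 < r := hr.1
    set c : ℝ := 1 / (2 * m - lam) with hcdef
    have hfun : h R = fun r : ℝ => c * ((r / R) ^ alpha * R ^ 2 - r ^ 2) :=
      funext fun r => hh R r
    have hd1 : ∀ x ∈ Set.Ioi (0:ℝ), deriv (h R) x
        = c * (alpha * (x / R) ^ (alpha - 1) * (1 / R) * R ^ 2 - 2 * x) := by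
      intro x hx
      rw [hfun]
      exact (cone_hasDerivAt1 c alpha R hR x hx).deriv
    have hev : deriv (h R) =ᶠ[nhds r]
        fun x => c * (alpha * (x / R) ^ (alpha - 1) * (1 / R) * R ^ 2 - 2 * x) :=
      Filter.eventuallyEq_of_mem (Ioi_mem_nhds hr0) hd1
    have hd2 : deriv (deriv (h R)) r
        = c * (alpha * ((alpha - 1) * (r / R) ^ (alpha - 1 - 1) * (1 / R)) * (1 / R) * R ^ 2 - 2) := by
      rw [hev.deriv_eq]
      exact (cone_hasDerivAt2 c alpha R hR r hr0).deriv
    rw [hd2, hd1 r hr0, hh R r]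
    have hp : 0 < r / R := div_pos hr0 hR
    have e1 : (r / R) ^ (alpha - 1) = (r / R) ^ (alpha - 2) * (r / R) := by
      rw [show alpha - 1 = (alpha - 2) + 1 by ring, Real.rpow_add hp, Real.rpow_one]
    have e2 : (r / R) ^ alpha = (r / R) ^ (alpha - 2) * (r / R) ^ (2:ℕ) := by
      rw [← Real.rpow_natCast (r / R) 2, ← Real.rpow_add hp,
        show alpha - 2 + ((2:ℕ):ℝ) = alpha by push_cast; ring]
    have e0 : alpha - 1 - 1 = alpha - 2 := by ring
    rw [e0, e1, e2]
    set t : ℝ := (r / R) ^ (alpha - 2) with htdef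
    have hc1 : c * (2 * (m:ℝ) - lam) = 1 := by
      rw [hcdef]; field_simp
    have main : c * (alpha * ((alpha - 1) * t * (1 / R)) * (1 / R) * R ^ 2 - 2)
        + ((m:ℝ) - 1) / r * (c * (alpha * (t * (r / R)) * (1 / R) * R ^ 2 - 2 * r))
        - lam / r ^ 2 * (c * (t * (r / R) ^ (2:ℕ) * R ^ 2 - r ^ 2))
        = c * (lam - 2 * (m:ℝ)) + c * t * (alpha ^ 2 + ((m:ℝ) - 2) * alpha - lam) := by
      field_simp
      ring
    rw [main, hquad, sub_self, mul_zero, add_zero]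
    linear_combination -hc1
  · -- boundary values and positivity
    intro R hR1
    have hR : (0:ℝ) < R := by linarith
    refine ⟨?_, ?_, ?_⟩
    · rw [hh]
      simp [Real.zero_rpow ha0.ne', zero_div]
    · rw [hh]
      simp [div_self hR.ne', Real.one_rpow]
    · intro r hr
      rw [hh]
      have hp : 0 < r / R := div_pos hr.1 hR
      have hp1 : r / R < 1 := (div_lt_one hR).2 hr.2
      have key : (r / R) ^ (2:ℝ) < (r / R) ^ alpha :=
        Real.rpow_lt_rpow_of_exponent_gt hp hp1 ha2
      have key' : (r / R) ^ (2:ℕ) < (r / R) ^ alpha := by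
        rw [← Real.rpow_natCast (r / R) 2]; exact_mod_cast key
      have key2 : (r / R) ^ (2:ℕ) * R ^ 2 = r ^ 2 := by
        rw [div_pow, div_mul_cancel₀]
        positivity
      have hlt : r ^ 2 < (r / R) ^ alpha * R ^ 2 := by
        rw [← key2]
        exact mul_lt_mul_of_pos_right key' (by positivity)
      have hcpos : 0 < 1 / (2 * (m:ℝ) - lam) := by positivity
      exact mul_pos hcpos (by linarith)
  · -- tendsto
    have key : ∀ᶠ R : ℝ in Filter.atTop,
        (R ^ (2 - alpha) - 1) / (2 * m - lam) = h R 1 := by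
      filter_upwards [Filter.eventually_gt_atTop (1:ℝ)] with R hR1
      exact (hval R hR1).symm
    refine Filter.Tendsto.congr' key ?_
    have h1 : Filter.Tendsto (fun R : ℝ => R ^ (2 - alpha) - 1) Filter.atTop Filter.atTop := by
      simpa [sub_eq_add_neg] using
        Filter.tendsto_atTop_add_const_right Filter.atTop (-1 : ℝ)
          (tendsto_rpow_atTop (by linarith : (0:ℝ) < 2 - alpha))
    exact h1.atTop_div_const hclam
end

section
/- Let m ≥ 1 be an integer and for R > 1 define h_R : [1,R] → ℝ by h_R(r) = (1/(m+2))·[ (R^{m+2}/(R^{m+2}−1))·(r² − r^{−m})·log R − r²·log r ]. Then: (a) for every r ∈ (1,R), h_R''(r) + ((m−1)/r)·h_R'(r) − (2m/r²)·h_R(r) = −1; (b) h_R(1) = h_R(R) = 0; (c) h_R(2) → +∞ as R → +∞. -/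
open Filter


/-- Radial solution of the cone mean exit time equation in the borderline case `λ = 2m`: with
`h_R(r) = (1/(m+2))·[(R^{m+2}/(R^{m+2}-1))·(r² - r^{-m})·log R - r²·log r]`, one has
(a) `h_R'' + ((m-1)/r)h_R' - (2m/r²)h_R = -1` on `(1,R)`; (b) `h_R(1) = h_R(R) = 0`;
(c) `h_R(2) → +∞` as `R → +∞`. -/
theorem cone_exit_time_radial_ode_borderline (m : ℕ) (hm : 1 ≤ m)
    (h : ℝ → ℝ → ℝ)
    (hh : ∀ R r : ℝ, h R r = (1 / ((m : ℝ) + 2)) *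
      ((R ^ (m + 2) / (R ^ (m + 2) - 1)) * (r ^ 2 - r ^ (-(m : ℝ))) * Real.log R
        - r ^ 2 * Real.log r)) :
    (∀ R : ℝ, 1 < R → ∀ r ∈ Set.Ioo (1 : ℝ) R,
      deriv (deriv (h R)) r + (((m : ℝ) - 1) / r) * deriv (h R) r
        - ((2 * m : ℝ) / r ^ 2) * h R r = -1) ∧
    (∀ R : ℝ, 1 < R → h R 1 = 0 ∧ h R R = 0) ∧
    Filter.Tendsto (fun R : ℝ => h R 2) Filter.atTop Filter.atTop := by
  have hM2 : ((m:ℝ) + 2) ≠ 0 := by positivity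
  refine ⟨?_, ?_, ?_⟩
  · intro R hR r hr
    obtain ⟨hr1, hrR⟩ := hr
    have hr0 : (0:ℝ) < r := lt_trans one_pos hr1
    set M : ℝ := (m:ℝ) with hMdef
    set c : ℝ := 1 / (M + 2) with hc
    set B : ℝ := R ^ (m + 2) / (R ^ (m + 2) - 1) with hB
    set L : ℝ := Real.log R with hL
    have hfun : h R = fun x : ℝ => c * (B * (x ^ 2 - x ^ (-M)) * L - x ^ 2 * Real.log x) :=
      funext fun x => hh R x
    have hd1 : ∀ x : ℝ, 0 < x → HasDerivAt (h R)
        (c * (B * (2 * x - (-M) * x ^ (-M - 1)) * L - (2 * x * Real.log x + x))) x := by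
      intro x hx
      rw [hfun]
      have h1 : HasDerivAt (fun y : ℝ => y ^ 2) (2 * x) x := by
        simpa [mul_comm] using hasDerivAt_pow 2 x
      have h2 : HasDerivAt (fun y : ℝ => y ^ (-M)) ((-M) * x ^ (-M - 1)) x :=
        Real.hasDerivAt_rpow_const (Or.inl hx.ne')
      have h4 : HasDerivAt (fun y : ℝ => y ^ 2 * Real.log y) (2 * x * Real.log x + x) x := by
        have := h1.mul (Real.hasDerivAt_log hx.ne')
        refine this.congr_deriv ?_
        field_simp
      exact ((((h1.sub h2).const_mul B).mul_const L).sub h4).const_mul c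
    have heq : deriv (h R) =ᶠ[nhds r]
        fun x : ℝ => c * (B * (2 * x - (-M) * x ^ (-M - 1)) * L - (2 * x * Real.log x + x)) := by
      filter_upwards [eventually_gt_nhds hr0] with x hx
      exact (hd1 x hx).deriv
    have hder1 : deriv (h R) r
        = c * (B * (2 * r - (-M) * r ^ (-M - 1)) * L - (2 * r * Real.log r + r)) :=
      (hd1 r hr0).deriv
    have hd2 : HasDerivAt
        (fun x : ℝ => c * (B * (2 * x - (-M) * x ^ (-M - 1)) * L - (2 * x * Real.log x + x)))
        (c * (B * (2 - (-M) * ((-M - 1) * r ^ (-M - 1 - 1))) * L - (2 * Real.log r + 3))) r := by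
      have h1 : HasDerivAt (fun y : ℝ => 2 * y) 2 r := by
        simpa using (hasDerivAt_id r).const_mul (2:ℝ)
      have h2 : HasDerivAt (fun y : ℝ => y ^ (-M - 1)) ((-M - 1) * r ^ (-M - 1 - 1)) r :=
        Real.hasDerivAt_rpow_const (Or.inl hr0.ne')
      have h3 : HasDerivAt (fun y : ℝ => 2 * y * Real.log y + y) (2 * Real.log r + 3) r := by
        have := (h1.mul (Real.hasDerivAt_log hr0.ne')).add (hasDerivAt_id r)
        refine this.congr_deriv ?_
        field_simp
        ring
      exact ((((h1.sub (h2.const_mul (-M))).const_mul B).mul_const L).sub h3).const_mul c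
    have hder2 : deriv (deriv (h R)) r
        = c * (B * (2 - (-M) * ((-M - 1) * r ^ (-M - 1 - 1))) * L - (2 * Real.log r + 3)) := by
      rw [heq.deriv_eq]
      exact hd2.deriv
    have e1 : r ^ (-M - 1) = r ^ (-M) / r := by
      rw [Real.rpow_sub hr0, Real.rpow_one]
    have e2 : r ^ (-M - 1 - 1) = r ^ (-M) / r / r := by
      rw [Real.rpow_sub hr0, Real.rpow_one, e1]
    rw [hder2, hder1, hh R r, e1, e2, hc]
    field_simp
    ring
  · intro R hR
    have hR0 : (0:ℝ) < R := lt_trans one_pos hR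
    have hP : (1:ℝ) < R ^ (m + 2) := one_lt_pow₀ hR (by omega)
    have hne : R ^ (m + 2) - 1 ≠ 0 := sub_ne_zero.mpr (ne_of_gt hP)
    constructor
    · rw [hh]
      simp [Real.one_rpow]
    · rw [hh]
      have key : R ^ (m + 2) * R ^ (-(m:ℝ)) = R ^ 2 := by
        rw [← Real.rpow_natCast R (m + 2), ← Real.rpow_add hR0, ← Real.rpow_natCast R 2]
        congr 1
        push_cast
        ring
      have hBR : R ^ (m + 2) / (R ^ (m + 2) - 1) * (R ^ 2 - R ^ (-(m:ℝ))) = R ^ 2 := by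
        rw [div_mul_eq_mul_div, div_eq_iff hne]
        linear_combination -key
      rw [hBR]
      ring
  · have base : Filter.Tendsto (fun R : ℝ =>
        (1 / ((m:ℝ) + 2)) * (3 * Real.log R - 4 * Real.log 2)) Filter.atTop Filter.atTop := by
      apply Filter.Tendsto.const_mul_atTop (by positivity)
      have h1 : Tendsto (fun R : ℝ => 3 * Real.log R) atTop atTop :=
        Real.tendsto_log_atTop.const_mul_atTop (by norm_num)
      simpa [sub_eq_add_neg] using tendsto_atTop_add_const_right atTop (-(4*Real.log 2)) h1
    apply Filter.tendsto_atTop_mono' Filter.atTop _ base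
    filter_upwards [Filter.eventually_gt_atTop (1:ℝ)] with R hR
    rw [hh]
    have hP : (1:ℝ) < R ^ (m + 2) := one_lt_pow₀ hR (by omega)
    have hPs : (0:ℝ) < R ^ (m + 2) - 1 := sub_pos.mpr hP
    have hB1 : (1:ℝ) ≤ R ^ (m + 2) / (R ^ (m + 2) - 1) := by
      rw [le_div_iff₀ hPs]; linarith
    have hu : (2:ℝ) ^ (-(m:ℝ)) ≤ 1 :=
      Real.rpow_le_one_of_one_le_of_nonpos (by norm_num) (by simp)
    have hu0 : (0:ℝ) < (2:ℝ) ^ (-(m:ℝ)) := Real.rpow_pos_of_pos (by norm_num) _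
    have hL0 : 0 ≤ Real.log R := Real.log_nonneg hR.le
    have hkey : 3 * Real.log R
        ≤ R ^ (m + 2) / (R ^ (m + 2) - 1) * ((2:ℝ) ^ 2 - (2:ℝ) ^ (-(m:ℝ))) * Real.log R := by
      have h34 : (3:ℝ) ≤ R ^ (m + 2) / (R ^ (m + 2) - 1) * ((2:ℝ)^2 - (2:ℝ)^(-(m:ℝ))) := by
        nlinarith
      nlinarith
    have hc0 : (0:ℝ) ≤ 1 / ((m:ℝ) + 2) := by positivity
    apply mul_le_mul_of_nonneg_left _ hc0
    have h22 : ((2:ℝ)^2) * Real.log 2 = 4 * Real.log 2 := by norm_num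
    linarith [hkey]
end

section
/- Let B̄ ≥ 1/2 be a real number and t > 0. Define σ : [0,t) → ℝ by σ(s) = (1/(2B̄))·t^{1/2+B̄}·(t−s)^{1/2−B̄}·(1 − (1 − s/t)^{2B̄}). Then σ(s) ≥ d̄·s for every s ∈ [0,t), where d̄ = min{ 2^{1−2B̄}, (1 − 2^{−2B̄})/(2B̄) } > 0 depends only on B̄. More precisely, σ(s) ≥ 2^{1−2B̄}·s for s ∈ [0, t/2] and σ(s) ≥ ((1 − 2^{−2B̄})/(2B̄))·s for s ∈ [t/2, t). -/
/-- Key convexity inequality: for `0 < u ≤ 1` and `1 ≤ p`,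
`p·u^(p-1)·(1-u) ≤ 1 - u^p` (gradient inequality for the convex function `x^p`). -/
lemma rpow_grad_ineq {u p : ℝ} (hu0 : 0 < u) (hu1 : u ≤ 1) (hp : 1 ≤ p) :
    p * u ^ (p - 1) * (1 - u) ≤ 1 - u ^ p := by
  have hs : (-1 : ℝ) ≤ (1 - u) / u := by
    have : (0:ℝ) ≤ (1 - u) / u := div_nonneg (by linarith) hu0.le
    linarith
  have hb := one_add_mul_self_le_rpow_one_add hs hp
  have h1 : (1 : ℝ) + (1 - u) / u = u⁻¹ := by field_simp; ring
  rw [h1, Real.inv_rpow hu0.le] at hb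
  have hup : (0:ℝ) < u ^ p := Real.rpow_pos_of_pos hu0 p
  have hb' := mul_le_mul_of_nonneg_left hb hup.le
  rw [mul_inv_cancel₀ hup.ne'] at hb'
  rw [Real.rpow_sub_one hu0.ne']
  have key : u ^ p * (1 + p * ((1 - u) / u)) = u ^ p + p * (u ^ p / u) * (1 - u) := by
    field_simp
  rw [key] at hb'
  linarith

/-- Linear lower bound for the comparison warping function arising from the Ricci bound
`Ric ≥ -(m-1)B²/(1+r²)`: for `B̄ ≥ 1/2`, `t > 0` and
`σ(s) = (1/(2B̄))·t^{1/2+B̄}·(t-s)^{1/2-B̄}·(1 - (1-s/t)^{2B̄})`, one has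
`σ(s) ≥ 2^{1-2B̄}·s` on `[0,t/2]`, `σ(s) ≥ ((1-2^{-2B̄})/(2B̄))·s` on `[t/2,t)`, and hence
`σ(s) ≥ d̄·s` on `[0,t)` with `d̄ = min{2^{1-2B̄}, (1-2^{-2B̄})/(2B̄)} > 0`. -/
theorem warping_function_linear_lower_bound (B : ℝ) (hB : 1 / 2 ≤ B) (t : ℝ) (ht : 0 < t)
    (σ : ℝ → ℝ)
    (hσ : ∀ s : ℝ, σ s = (1 / (2 * B)) * t ^ ((1 : ℝ) / 2 + B) *
      (t - s) ^ ((1 : ℝ) / 2 - B) * (1 - (1 - s / t) ^ (2 * B))) :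
    (0 < min ((2 : ℝ) ^ (1 - 2 * B)) ((1 - (2 : ℝ) ^ (-(2 * B))) / (2 * B))) ∧
    (∀ s ∈ Set.Icc (0 : ℝ) (t / 2), (2 : ℝ) ^ (1 - 2 * B) * s ≤ σ s) ∧
    (∀ s ∈ Set.Ico (t / 2) t, ((1 - (2 : ℝ) ^ (-(2 * B))) / (2 * B)) * s ≤ σ s) ∧
    (∀ s ∈ Set.Ico (0 : ℝ) t,
      min ((2 : ℝ) ^ (1 - 2 * B)) ((1 - (2 : ℝ) ^ (-(2 * B))) / (2 * B)) * s ≤ σ s) := by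
  have hBpos : (0:ℝ) < B := lt_of_lt_of_le (by norm_num) hB
  have h2B : (1:ℝ) ≤ 2 * B := by linarith
  have h2Bpos : (0:ℝ) < 2 * B := by linarith
  have hc1 : (0:ℝ) < 2 ^ (1 - 2 * B) := Real.rpow_pos_of_pos (by norm_num) _
  have hlt : (2:ℝ) ^ (-(2 * B)) < 1 :=
    Real.rpow_lt_one_of_one_lt_of_neg (by norm_num) (by linarith)
  have hc2 : (0:ℝ) < (1 - (2:ℝ) ^ (-(2 * B))) / (2 * B) := div_pos (by linarith) h2Bpos
  have hhalf : ((1:ℝ)/2) ^ (2 * B) = (2:ℝ) ^ (-(2 * B)) := by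
    rw [Real.rpow_neg (by norm_num : (0:ℝ) ≤ 2), ← Real.inv_rpow (by norm_num : (0:ℝ) ≤ 2),
      one_div]
  -- normalized form of σ
  have hσ' : ∀ s : ℝ, 0 ≤ s → s < t →
      σ s = 1/(2*B) * t * (1 - s/t) ^ ((1:ℝ)/2 - B) * (1 - (1 - s/t) ^ (2*B)) := by
    intro s hs0 hst
    have hu0 : (0:ℝ) < 1 - s/t := by
      have : s/t < 1 := (div_lt_one ht).mpr hst
      linarith
    have hts : t - s = t * (1 - s/t) := by field_simp
    have htt : t ^ ((1:ℝ)/2 + B) * t ^ ((1:ℝ)/2 - B) = t := by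
      rw [← Real.rpow_add ht]; norm_num
    rw [hσ s, hts, Real.mul_rpow ht.le hu0.le,
      show 1/(2*B) * t ^ ((1:ℝ)/2 + B) * (t ^ ((1:ℝ)/2 - B) * (1 - s/t) ^ ((1:ℝ)/2 - B))
        = 1/(2*B) * (t ^ ((1:ℝ)/2 + B) * t ^ ((1:ℝ)/2 - B)) * (1 - s/t) ^ ((1:ℝ)/2 - B)
        from by ring, htt]
  have claim1 : ∀ s ∈ Set.Icc (0 : ℝ) (t / 2), (2 : ℝ) ^ (1 - 2 * B) * s ≤ σ s := by
    rintro s ⟨hs0, hs2⟩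
    have hst : s < t := lt_of_le_of_lt hs2 (by linarith)
    set u : ℝ := 1 - s/t with hu
    have hu0 : (0:ℝ) < u := by
      have : s/t < 1 := (div_lt_one ht).mpr hst
      simp only [hu]; linarith
    have hu1 : u ≤ 1 := by
      have : 0 ≤ s/t := div_nonneg hs0 ht.le
      simp only [hu]; linarith
    have huh : (1:ℝ)/2 ≤ u := by
      have : s/t ≤ 1/2 := by rw [div_le_iff₀ ht]; linarith
      simp only [hu]; linarith
    have e1 : 2*B * u ^ (2*B - 1) * (1 - u) ≤ 1 - u ^ (2*B) := rpow_grad_ineq hu0 hu1 h2B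
    have hsu : s = t * (1 - u) := by
      simp only [hu]; field_simp; ring
    calc (2:ℝ) ^ (1 - 2*B) * s ≤ u ^ (B - 1/2) * s := by
          apply mul_le_mul_of_nonneg_right _ hs0
          calc (2:ℝ) ^ (1 - 2*B) ≤ 2 ^ ((1:ℝ)/2 - B) :=
                Real.rpow_le_rpow_of_exponent_le (by norm_num) (by linarith)
            _ = ((1:ℝ)/2) ^ (B - 1/2) := by
                rw [show (1:ℝ)/2 - B = -(B - 1/2) from by ring,
                  Real.rpow_neg (by norm_num : (0:ℝ) ≤ 2),
                  ← Real.inv_rpow (by norm_num : (0:ℝ) ≤ 2), one_div]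
            _ ≤ u ^ (B - 1/2) := Real.rpow_le_rpow (by norm_num) huh (by linarith)
      _ = 1/(2*B) * t * u ^ ((1:ℝ)/2 - B) * (2*B * u ^ (2*B - 1) * (1 - u)) := by
          rw [show u ^ (B - 1/2) = u ^ ((1:ℝ)/2 - B) * u ^ (2*B - 1) from by
            rw [← Real.rpow_add hu0]; congr 1; ring]
          rw [hsu]; field_simp
      _ ≤ 1/(2*B) * t * u ^ ((1:ℝ)/2 - B) * (1 - u ^ (2*B)) := by
          apply mul_le_mul_of_nonneg_left e1
          positivity
      _ = σ s := (hσ' s hs0 hst).symm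
  have claim2 : ∀ s ∈ Set.Ico (t / 2) t, ((1 - (2 : ℝ) ^ (-(2 * B))) / (2 * B)) * s ≤ σ s := by
    rintro s ⟨hs2, hst⟩
    have hs0 : (0:ℝ) ≤ s := le_trans (by linarith) hs2
    set u : ℝ := 1 - s/t with hu
    have hu0 : (0:ℝ) < u := by
      have : s/t < 1 := (div_lt_one ht).mpr hst
      simp only [hu]; linarith
    have huh : u ≤ 1/2 := by
      have : (1:ℝ)/2 ≤ s/t := by rw [le_div_iff₀ ht]; linarith
      simp only [hu]; linarith
    have hA : 1 ≤ u ^ ((1:ℝ)/2 - B) :=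
      Real.one_le_rpow_of_pos_of_le_one_of_nonpos hu0 (le_trans huh (by norm_num)) (by linarith)
    have hBle : u ^ (2*B) ≤ (2:ℝ) ^ (-(2*B)) := by
      calc u ^ (2*B) ≤ ((1:ℝ)/2) ^ (2*B) := Real.rpow_le_rpow hu0.le huh (by linarith)
        _ = (2:ℝ) ^ (-(2*B)) := hhalf
    calc ((1 - (2:ℝ) ^ (-(2*B))) / (2*B)) * s ≤ ((1 - (2:ℝ) ^ (-(2*B))) / (2*B)) * t :=
          mul_le_mul_of_nonneg_left hst.le hc2.le
      _ = 1/(2*B) * t * 1 * (1 - (2:ℝ) ^ (-(2*B))) := by ring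
      _ ≤ 1/(2*B) * t * u ^ ((1:ℝ)/2 - B) * (1 - u ^ (2*B)) := by
          apply mul_le_mul (mul_le_mul_of_nonneg_left hA (by positivity)) (by linarith)
            (by linarith) (by positivity)
      _ = σ s := (hσ' s hs0 hst).symm
  refine ⟨lt_min hc1 hc2, claim1, claim2, ?_⟩
  rintro s ⟨hs0, hst⟩
  rcases le_or_gt s (t/2) with h | h
  · exact le_trans (mul_le_mul_of_nonneg_right (min_le_left _ _) hs0) (claim1 s ⟨hs0, h⟩)
  · exact le_trans (mul_le_mul_of_nonneg_right (min_le_right _ _) hs0) (claim2 s ⟨h.le, hst⟩)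
end
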